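/- arXiv:2007.02508 — 4 statements merged into one kernel-verified Lean document; each statement's English description precedes it below -/
import Mathlib

section
/- For every integer r ≥ 0, ₍ᵣ₊₃₎F₍ᵣ₊₂₎({1}_{r+3}; 3/2, {2}_{r+1}; 1) = (2^{r+1}(−1)^r / r!) · Σ_{j=0}^r (r choose j) (−log 2)^{r−j} ∫₀^{π/2} x · log^j(2 sin x) dx. -/
open scoped BigOperators
open scoped Real
open Filter

/-- Pochhammer symbol `(x)_n = x (x+1) ⋯ (x+n-1)` for a real `x`. -/
noncomputable def poch (x : ℝ) (n : ℕ) : ℝ := ∏ i ∈ Finset.range n, (x + i)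

/-- The generalized hypergeometric series `ₚF_q(a; b; z)`, where the numerator
parameters are the entries of the list `a` and the denominator parameters are
the entries of the list `b`. -/
noncomputable def hyp (a b : List ℝ) (z : ℝ) : ℝ :=
  ∑' n : ℕ, ((a.map fun x => poch x n).prod / (b.map fun x => poch x n).prod)
    * z ^ n / (n.factorial : ℝ)

open Real Set MeasureTheory intervalIntegral

lemma poch_one (n : ℕ) : poch 1 n = n.factorial := by
  induction n with
  | zero => simp [poch]
  | succ n ih =>
    rw [poch, Finset.prod_range_succ, ← poch, ih, Nat.factorial_succ]
    push_cast; ring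

lemma poch_two (n : ℕ) : poch 2 n = (n + 1).factorial := by
  induction n with
  | zero => simp [poch]
  | succ n ih =>
    rw [poch, Finset.prod_range_succ, ← poch, ih, Nat.factorial_succ (n+1)]
    push_cast; ring

lemma poch_th (n : ℕ) : poch (3/2) n = (2 * n + 1).factorial / (4 ^ n * n.factorial) := by
  induction n with
  | zero => simp [poch]
  | succ n ih =>
    rw [poch, Finset.prod_range_succ, ← poch, ih]
    have e : ((2 * (n+1) + 1).factorial : ℝ) = (2*n+3) * ((2*n+2) * (2*n+1).factorial) := by
      have h : 2*(n+1)+1 = (2*n+1) + 1 + 1 := by ring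
      rw [h, Nat.factorial_succ (2*n+1+1), Nat.factorial_succ (2*n+1)]
      push_cast; ring
    rw [e, Nat.factorial_succ n]
    have h2 : ((2 * n + 1).factorial : ℝ) ≠ 0 := Nat.cast_ne_zero.2 (Nat.factorial_ne_zero _)
    have h3 : ((n).factorial : ℝ) ≠ 0 := Nat.cast_ne_zero.2 (Nat.factorial_ne_zero _)
    have h4 : (4:ℝ) ^ n ≠ 0 := by positivity
    push_cast
    field_simp
    ring

lemma term_eq (r n : ℕ) :
    ((List.replicate (r + 3) (1:ℝ)).map fun x => poch x n).prod /
      ((((3:ℝ) / 2) :: List.replicate (r + 1) (2 : ℝ)).map fun x => poch x n).prod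
      * (1:ℝ) ^ n / (n.factorial : ℝ)
    = 4 ^ n * (n.factorial:ℝ)^2 / ((2*n+1).factorial * ((n:ℝ)+1)^(r+1)) := by
  rw [List.map_replicate, List.map_cons, List.map_replicate, List.prod_replicate,
    List.prod_cons, List.prod_replicate, poch_one, poch_two, poch_th]
  have h2 : ((2 * n + 1).factorial : ℝ) ≠ 0 := Nat.cast_ne_zero.2 (Nat.factorial_ne_zero _)
  have h3 : ((n).factorial : ℝ) ≠ 0 := Nat.cast_ne_zero.2 (Nat.factorial_ne_zero _)
  have h4 : (4:ℝ) ^ n ≠ 0 := by positivity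
  have h5 : ((n:ℝ)+1) ≠ 0 := by positivity
  have h6 : ((n+1).factorial : ℝ) = ((n:ℝ)+1) * n.factorial := by
    rw [Nat.factorial_succ]; push_cast; ring
  rw [one_pow, h6, mul_pow]
  field_simp
  ring

lemma wallis (n : ℕ) : ∫ x in (0:ℝ)..(π/2), sin x ^ (2*n+1)
    = 4 ^ n * ((n.factorial:ℝ))^2 / (2*n+1).factorial := by
  induction n with
  | zero => simp
  | succ n ih =>
    have h : 2*(n+1)+1 = (2*n+1) + 2 := by ring
    rw [h, integral_sin_pow, ih]
    have e : ((2*n+1+2).factorial : ℝ) = (2*n+3) * ((2*n+2) * (2*n+1).factorial) := by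
      rw [show 2*n+1+2 = (2*n+1+1)+1 from by ring, Nat.factorial_succ (2*n+1+1),
        Nat.factorial_succ (2*n+1)]
      push_cast; ring
    have h2 : ((2 * n + 1).factorial : ℝ) ≠ 0 := Nat.cast_ne_zero.2 (Nat.factorial_ne_zero _)
    have h3 : ((n).factorial : ℝ) ≠ 0 := Nat.cast_ne_zero.2 (Nat.factorial_ne_zero _)
    rw [e, Nat.factorial_succ n]
    simp only [sin_zero, cos_pi_div_two, sin_pi_div_two, one_pow, cos_zero]
    push_cast
    have h7 : (2*(n:ℝ)+3) ≠ 0 := by positivity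
    field_simp
    ring

lemma exp_neg_image : (fun u : ℝ => Real.exp (-u)) '' (Ioi 0) = Ioo 0 1 := by
  ext t
  constructor
  · rintro ⟨u, hu, rfl⟩
    exact ⟨Real.exp_pos _, Real.exp_lt_one_iff.2 (neg_lt_zero.2 hu)⟩
  · rintro ⟨h0, h1⟩
    exact ⟨-Real.log t, by simpa using Real.log_neg h0 h1, by simp [Real.exp_log h0]⟩

lemma exp_neg_inj : InjOn (fun u : ℝ => Real.exp (-u)) (Ioi 0) :=
  fun a _ b _ h => by
    have := Real.exp_injective h; linarith [neg_injective this]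

lemma exp_neg_deriv : ∀ u ∈ Ioi (0:ℝ),
    HasDerivWithinAt (fun u : ℝ => Real.exp (-u)) (-Real.exp (-u)) (Ioi 0) u := by
  intro u _
  simpa using (show HasDerivWithinAt (fun u : ℝ => Real.exp (-u)) _ (Ioi 0) u from
    ((Real.hasDerivAt_exp (-u)).comp u (hasDerivAt_neg u)).hasDerivWithinAt)

lemma gamma_fun_eq (n r : ℕ) : ∀ u ∈ Ioi (0:ℝ),
    |(-Real.exp (-u))| • ((fun t : ℝ => t^n * (-Real.log t)^r) (Real.exp (-u)))
      = u ^ r * Real.exp (-(((n:ℝ)+1) * u)) := by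
  intro u _
  rw [abs_neg, abs_of_pos (Real.exp_pos _)]
  simp only [smul_eq_mul, Real.log_exp, neg_neg]
  rw [← Real.exp_nat_mul, show (-(((n:ℝ)+1)*u)) = -u + (n:ℝ)*(-u) from by ring,
    Real.exp_add]
  ring

lemma gamma_integrable (n r : ℕ) :
    IntegrableOn (fun u : ℝ => u ^ r * Real.exp (-(((n:ℝ)+1) * u))) (Ioi 0) := by
  have h := Real.GammaIntegral_convergent (s := (r:ℝ) + 1) (by positivity)
  refine h.mono' ?_ ?_
  · exact Continuous.aestronglyMeasurable (by continuity)
  · filter_upwards [ae_restrict_mem measurableSet_Ioi] with u hu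
    have hu' : (0:ℝ) < u := hu
    have hp : (0:ℝ) ≤ u ^ r := pow_nonneg hu'.le r
    rw [Real.norm_eq_abs,
      abs_of_nonneg (mul_nonneg hp (Real.exp_pos _).le),
      show ((r:ℝ)+1-1) = (r:ℝ) from by ring, Real.rpow_natCast]
    have h2 : Real.exp (-(((n:ℝ)+1)*u)) ≤ Real.exp (-u) := by
      apply Real.exp_le_exp.2
      have : (0:ℝ) ≤ (n:ℝ) * u := mul_nonneg (Nat.cast_nonneg n) hu'.le
      nlinarith
    calc u^r * Real.exp (-(((n:ℝ)+1)*u)) ≤ u^r * Real.exp (-u) :=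
          mul_le_mul_of_nonneg_left h2 hp
      _ = Real.exp (-u) * u^r := by ring

lemma V_integrable (n r : ℕ) :
    IntegrableOn (fun t : ℝ => t^n * (-Real.log t)^r) (Ioo 0 1) := by
  rw [← exp_neg_image,
    MeasureTheory.integrableOn_image_iff_integrableOn_abs_deriv_smul
      measurableSet_Ioi exp_neg_deriv exp_neg_inj]
  exact (gamma_integrable n r).congr_fun (fun u hu => (gamma_fun_eq n r u hu).symm) measurableSet_Ioi

lemma V_value (n r : ℕ) :
    ∫ t in Ioo (0:ℝ) 1, t^n * (-Real.log t)^r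
      = (r.factorial : ℝ) / ((n:ℝ)+1)^(r+1) := by
  rw [← exp_neg_image,
    MeasureTheory.integral_image_eq_integral_abs_deriv_smul
      measurableSet_Ioi exp_neg_deriv exp_neg_inj]
  rw [MeasureTheory.setIntegral_congr_fun measurableSet_Ioi (gamma_fun_eq n r)]
  have h := Real.integral_rpow_mul_exp_neg_mul_Ioi (a := r + 1) (r := (n:ℝ)+1)
    (by positivity) (by positivity)
  simp only [add_sub_cancel_right] at h
  have e : ∀ u ∈ Ioi (0:ℝ), u ^ r * Real.exp (-(((n:ℝ)+1) * u))
      = u ^ ((r:ℝ)) * Real.exp (-(((n:ℝ)+1) * u)) := by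
    intro u hu
    rw [Real.rpow_natCast]
  rw [MeasureTheory.setIntegral_congr_fun measurableSet_Ioi e, h,
    Real.Gamma_nat_eq_factorial, one_div, ← Real.rpow_natCast (((n:ℝ)+1)) (r+1),
    Real.inv_rpow (by positivity)]
  push_cast
  rw [div_eq_inv_mul]

noncomputable def Gfun (t : ℝ) : ℝ :=
  Real.arctan (Real.sqrt (t / (1 - t))) / Real.sqrt (t * (1 - t))

lemma G_cont (t : ℝ) (ht : t ∈ Ioo (0:ℝ) 1) :
    Continuous (fun x : ℝ => Real.sin x / (1 - t * Real.sin x ^ 2)) := by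
  obtain ⟨h0, h1⟩ := ht
  apply Continuous.div (by continuity) (by continuity)
  intro x
  have hs : Real.sin x ^ 2 ≤ 1 := sin_sq_le_one x
  have : t * Real.sin x ^ 2 < 1 := by nlinarith
  linarith

lemma G_value (t : ℝ) (ht : t ∈ Ioo (0:ℝ) 1) :
    ∫ x in (0:ℝ)..(π/2), Real.sin x / (1 - t * Real.sin x ^ 2) = Gfun t := by
  obtain ⟨h0, h1⟩ := ht
  have h1t : (0:ℝ) < 1 - t := by linarith
  set c : ℝ := Real.sqrt (t / (1 - t)) with hc
  have hc2 : c ^ 2 = t / (1 - t) := Real.sq_sqrt (div_pos h0 h1t).le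
  have hkey : Real.sqrt (t * (1 - t)) = c * (1 - t) := by
    rw [Real.sqrt_mul h0.le, hc, Real.sqrt_div h0.le]
    rw [div_mul_eq_mul_div, mul_div_assoc, Real.div_sqrt]
  have hcpos : 0 < c := Real.sqrt_pos.2 (div_pos h0 h1t)
  set H : ℝ → ℝ := fun x => -(Real.arctan (c * Real.cos x) / Real.sqrt (t * (1 - t))) with hH
  have hderiv : ∀ x ∈ uIcc (0:ℝ) (π/2), HasDerivAt H
      (Real.sin x / (1 - t * Real.sin x ^ 2)) x := by
    intro x _
    have h1' : HasDerivAt (fun x : ℝ => c * Real.cos x) (c * (-Real.sin x)) x :=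
      (Real.hasDerivAt_cos x).const_mul c
    have h2' : HasDerivAt (fun x : ℝ => Real.arctan (c * Real.cos x))
        ((1 / (1 + (c * Real.cos x) ^ 2)) * (c * (-Real.sin x))) x :=
      h1'.arctan
    have h3' := (h2'.div_const (Real.sqrt (t * (1 - t)))).neg
    refine h3'.congr_deriv ?_
    have hne : 0 < 1 - t * Real.sin x ^ 2 := by
      have hs : Real.sin x ^ 2 ≤ 1 := sin_sq_le_one x
      nlinarith
    have hden : 1 + (c * Real.cos x) ^ 2 = (1 - t * Real.sin x ^ 2) / (1 - t) := by
      rw [mul_pow, hc2, cos_sq']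
      field_simp
      ring
    rw [hden, hkey]
    field_simp
  rw [integral_eq_sub_of_hasDerivAt hderiv
    ((G_cont t ⟨h0, h1⟩).intervalIntegrable 0 (π/2))]
  simp only [hH, Real.cos_pi_div_two, Real.cos_zero, mul_zero, mul_one, Real.arctan_zero]
  rw [Gfun]
  ring

noncomputable def Wc (n : ℕ) : ℝ := 4 ^ n * ((n.factorial:ℝ))^2 / (2*n+1).factorial

lemma Wc_nonneg (n : ℕ) : 0 ≤ Wc n := by
  unfold Wc; positivity

lemma Wc_rec (n : ℕ) : Wc (n+1) = Wc n * (2*((n:ℝ)+1)/(2*(n:ℝ)+3)) := by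
  unfold Wc
  have e : ((2*(n+1)+1).factorial : ℝ) = (2*(n:ℝ)+3) * ((2*(n:ℝ)+2) * (2*n+1).factorial) := by
    rw [show 2*(n+1)+1 = (2*n+1+1)+1 from by ring, Nat.factorial_succ (2*n+1+1),
      Nat.factorial_succ (2*n+1)]
    push_cast; ring
  rw [e, Nat.factorial_succ n]
  have h2 : ((2 * n + 1).factorial : ℝ) ≠ 0 := Nat.cast_ne_zero.2 (Nat.factorial_ne_zero _)
  have h3 : ((n).factorial : ℝ) ≠ 0 := Nat.cast_ne_zero.2 (Nat.factorial_ne_zero _)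
  push_cast
  field_simp
  ring

lemma Wc_bound (n : ℕ) : Wc n ≤ 2 / Real.sqrt ((n:ℝ)+1) := by
  induction n with
  | zero => simp [Wc]
  | succ n ih =>
    rw [show (((n+1:ℕ)):ℝ)+1 = (n:ℝ)+2 from by push_cast; ring, Wc_rec]
    set a := Real.sqrt ((n:ℝ)+1) with ha
    set b := Real.sqrt ((n:ℝ)+2) with hb
    have ha2 : a^2 = (n:ℝ)+1 := Real.sq_sqrt (by positivity)
    have hb2 : b^2 = (n:ℝ)+2 := Real.sq_sqrt (by positivity)
    have hap : 0 < a := Real.sqrt_pos.2 (by positivity)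
    have hbp : 0 < b := Real.sqrt_pos.2 (by positivity)
    have hq : 0 ≤ 2*((n:ℝ)+1)/(2*(n:ℝ)+3) := by positivity
    have key : 2*((n:ℝ)+1) * b ≤ (2*(n:ℝ)+3) * a := by
      have h1 : 2*((n:ℝ)+1) * b = Real.sqrt ((2*((n:ℝ)+1))^2 * ((n:ℝ)+2)) := by
        rw [Real.sqrt_mul (by positivity), Real.sqrt_sq (by positivity), hb]
      have h2 : (2*(n:ℝ)+3) * a = Real.sqrt ((2*(n:ℝ)+3)^2 * ((n:ℝ)+1)) := by
        rw [Real.sqrt_mul (by positivity), Real.sqrt_sq (by positivity), ha]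
      rw [h1, h2]
      apply Real.sqrt_le_sqrt
      nlinarith [sq_nonneg ((n:ℝ))]
    calc Wc n * (2*((n:ℝ)+1)/(2*(n:ℝ)+3)) ≤ (2/a) * (2*((n:ℝ)+1)/(2*(n:ℝ)+3)) :=
          mul_le_mul_of_nonneg_right ih hq
      _ ≤ 2 / b := by
          rw [div_mul_div_comm]
          rw [div_le_div_iff₀ (by positivity) hbp]
          nlinarith
    
lemma term_bound (r n : ℕ) :
    Wc n * ((r.factorial:ℝ)/((n:ℝ)+1)^(r+1)) ≤ 2*(r.factorial:ℝ)/(((n:ℝ)+1) * Real.sqrt ((n:ℝ)+1)) := by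
  have h1 : ((n:ℝ)+1) ≤ ((n:ℝ)+1)^(r+1) := by
    calc ((n:ℝ)+1) = ((n:ℝ)+1)^1 := (pow_one _).symm
    _ ≤ ((n:ℝ)+1)^(r+1) := pow_le_pow_right₀ (by linarith [Nat.cast_nonneg (α := ℝ) n]) (by omega)
  have h2 : (r.factorial:ℝ)/((n:ℝ)+1)^(r+1) ≤ (r.factorial:ℝ)/((n:ℝ)+1) := by
    apply div_le_div_of_nonneg_left (by positivity) (by positivity) h1
  calc Wc n * ((r.factorial:ℝ)/((n:ℝ)+1)^(r+1))
      ≤ (2 / Real.sqrt ((n:ℝ)+1)) * ((r.factorial:ℝ)/((n:ℝ)+1)) := by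
        apply mul_le_mul (Wc_bound n) h2 (by positivity) (by positivity)
    _ = 2*(r.factorial:ℝ)/(((n:ℝ)+1) * Real.sqrt ((n:ℝ)+1)) := by
        field_simp

lemma summable_bound (r : ℕ) :
    Summable (fun n : ℕ => 2*(r.factorial:ℝ)/(((n:ℝ)+1) * Real.sqrt ((n:ℝ)+1))) := by
  have h1 : Summable (fun n : ℕ => 1/((n:ℝ)) ^ (3/2 : ℝ)) :=
    Real.summable_one_div_nat_rpow.2 (by norm_num)
  have h2 : Summable (fun n : ℕ => 1/((n:ℝ)+1) ^ (3/2 : ℝ)) := by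
    have := (summable_nat_add_iff (f := fun n : ℕ => 1/((n:ℝ)) ^ (3/2 : ℝ)) 1).2 h1
    simpa [Nat.cast_add] using this
  apply Summable.congr (h2.mul_left (2*(r.factorial:ℝ)))
  intro n
  have hp : (0:ℝ) < (n:ℝ)+1 := by positivity
  rw [show (3/2 : ℝ) = 1 + 1/2 from by norm_num, Real.rpow_add hp, Real.rpow_one,
    ← Real.sqrt_eq_rpow]
  rw [mul_one_div]

lemma Gfun_nonneg (t : ℝ) : 0 ≤ Gfun t := by
  apply div_nonneg ?_ (Real.sqrt_nonneg _)
  rw [← Real.arctan_zero]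
  exact Real.arctan_strictMono.monotone (Real.sqrt_nonneg _)

lemma interval_to_Ioo {f : ℝ → ℝ} : ∫ x in (0:ℝ)..(π/2), f x = ∫ x in Ioo (0:ℝ) (π/2), f x := by
  rw [integral_of_le (by positivity), MeasureTheory.integral_Ioc_eq_integral_Ioo]

lemma sin_mem (x : ℝ) (hx : x ∈ Ioo (0:ℝ) (π/2)) : 0 < Real.sin x ∧ Real.sin x < 1 := by
  obtain ⟨h1, h2⟩ := hx
  constructor
  · exact Real.sin_pos_of_pos_of_lt_pi h1 (by linarith [Real.pi_pos])
  · calc Real.sin x < Real.sin (π/2) := by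
          apply Real.strictMonoOn_sin ⟨by linarith, by linarith⟩
            ⟨by linarith [Real.pi_pos], le_refl _⟩ h2
      _ = 1 := Real.sin_pi_div_two

/-- inner geometric-sum identity -/
lemma inner_swap (t : ℝ) (ht : t ∈ Ioo (0:ℝ) 1) :
    ∑' n : ℕ, ENNReal.ofReal (Wc n * t ^ n)
      = ENNReal.ofReal (Gfun t) := by
  unfold Wc
  obtain ⟨ht0, ht1⟩ := ht
  have key : ∀ n : ℕ, ENNReal.ofReal ((4 ^ n * ((n.factorial:ℝ))^2 / (2*n+1).factorial) * t ^ n)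
      = ∫⁻ x in Ioo (0:ℝ) (π/2), ENNReal.ofReal (Real.sin x ^ (2*n+1) * t ^ n) := by
    intro n
    have h1 : (4 ^ n * ((n.factorial:ℝ))^2 / (2*n+1).factorial) * t ^ n
        = ∫ x in Ioo (0:ℝ) (π/2), Real.sin x ^ (2*n+1) * t ^ n := by
      rw [← interval_to_Ioo, intervalIntegral.integral_mul_const, wallis]
    rw [h1, MeasureTheory.ofReal_integral_eq_lintegral_ofReal]
    · exact (Continuous.integrableOn_Icc (by continuity)).mono_set Ioo_subset_Icc_self
    · filter_upwards [ae_restrict_mem measurableSet_Ioo] with x hx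
      exact mul_nonneg (pow_nonneg (sin_mem x hx).1.le _) (pow_nonneg ht0.le _)
  simp_rw [key]
  rw [← MeasureTheory.lintegral_tsum (fun n => (show Measurable fun x => ENNReal.ofReal (Real.sin x ^ (2*n+1) * t ^ n) from
    ((Real.measurable_sin.pow_const _).mul measurable_const).ennreal_ofReal).aemeasurable)]
  have ptw : ∀ x ∈ Ioo (0:ℝ) (π/2),
      ∑' n : ℕ, ENNReal.ofReal (Real.sin x ^ (2*n+1) * t ^ n)
        = ENNReal.ofReal (Real.sin x / (1 - t * Real.sin x ^ 2)) := by
    intro x hx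
    obtain ⟨hs0, hs1⟩ := sin_mem x hx
    have hq0 : 0 ≤ t * Real.sin x ^ 2 := by positivity
    have hq1 : t * Real.sin x ^ 2 < 1 := by nlinarith
    have he : ∀ n : ℕ, Real.sin x ^ (2*n+1) * t ^ n
        = Real.sin x * (t * Real.sin x ^ 2) ^ n := by
      intro n
      rw [pow_add, pow_mul, pow_one, mul_pow]
      ring
    simp_rw [he]
    have hsumm : Summable (fun n : ℕ => Real.sin x * (t * Real.sin x ^ 2) ^ n) :=
      (summable_geometric_of_lt_one hq0 hq1).mul_left _
    rw [← ENNReal.ofReal_tsum_of_nonneg (fun n => by positivity) hsumm,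
      tsum_mul_left, tsum_geometric_of_lt_one hq0 hq1, div_eq_mul_inv]
  rw [MeasureTheory.setLIntegral_congr_fun measurableSet_Ioo ptw]
  rw [← MeasureTheory.ofReal_integral_eq_lintegral_ofReal]
  · rw [← interval_to_Ioo, G_value t ⟨ht0, ht1⟩]
  · exact ((G_cont t ⟨ht0, ht1⟩).integrableOn_Icc).mono_set Ioo_subset_Icc_self
  · filter_upwards [ae_restrict_mem measurableSet_Ioo] with x hx
    have := sin_mem x hx
    have hq1 : t * Real.sin x ^ 2 < 1 := by nlinarith [this.1, this.2]
    exact div_nonneg this.1.le (by linarith)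

/-- 1-dim lintegral change of variables -/
lemma lintegral_image_eq {s : Set ℝ} {f f' : ℝ → ℝ} (hs : MeasurableSet s)
    (hf' : ∀ x ∈ s, HasDerivWithinAt f (f' x) s x) (hf : InjOn f s) (g : ℝ → ENNReal) :
    ∫⁻ x in f '' s, g x = ∫⁻ x in s, ENNReal.ofReal |f' x| * g (f x) := by
  simpa only [ContinuousLinearMap.det_toSpanSingleton] using
    MeasureTheory.lintegral_image_eq_lintegral_abs_det_fderiv_mul volume hs
      (fun x hx => (hf' x hx).hasFDerivWithinAt) hf g

lemma sinsq_image : (fun θ : ℝ => Real.sin θ ^ 2) '' Ioo 0 (π/2) = Ioo 0 1 := by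
  ext t
  constructor
  · rintro ⟨θ, ⟨h1, h2⟩, rfl⟩
    have hs : 0 < Real.sin θ := Real.sin_pos_of_pos_of_lt_pi h1 (by linarith [Real.pi_pos])
    have hs1 : Real.sin θ < 1 := by
      calc Real.sin θ < Real.sin (π/2) := Real.strictMonoOn_sin
            ⟨by linarith, by linarith⟩ ⟨by linarith [Real.pi_pos], le_refl _⟩ h2
        _ = 1 := Real.sin_pi_div_two
    constructor
    · show 0 < Real.sin θ ^ 2; positivity
    · show Real.sin θ ^ 2 < 1; nlinarith
  · rintro ⟨h0, h1⟩
    refine ⟨Real.arcsin (Real.sqrt t), ⟨?_, ?_⟩, ?_⟩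
    · exact Real.arcsin_pos.2 (Real.sqrt_pos.2 h0)
    · exact Real.arcsin_lt_pi_div_two.2 (by
        rw [show (1:ℝ) = Real.sqrt 1 from (Real.sqrt_one).symm]
        exact Real.sqrt_lt_sqrt h0.le h1)
    · show Real.sin (Real.arcsin (Real.sqrt t)) ^ 2 = t
      rw [Real.sin_arcsin (by linarith [Real.sqrt_nonneg t]) (by
        rw [show (1:ℝ) = Real.sqrt 1 from (Real.sqrt_one).symm]
        exact (Real.sqrt_le_sqrt h1.le)), Real.sq_sqrt h0.le]

lemma sinsq_inj : InjOn (fun θ : ℝ => Real.sin θ ^ 2) (Ioo 0 (π/2)) := by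
  intro x hx y hy h
  have hsx : 0 < Real.sin x := Real.sin_pos_of_pos_of_lt_pi hx.1 (by linarith [Real.pi_pos, hx.2])
  have hsy : 0 < Real.sin y := Real.sin_pos_of_pos_of_lt_pi hy.1 (by linarith [Real.pi_pos, hy.2])
  have hxy : Real.sin x = Real.sin y := by
    simp only at h
    nlinarith
  exact Real.injOn_sin ⟨by linarith [hx.1, Real.pi_pos], by linarith [hx.2]⟩
    ⟨by linarith [hy.1, Real.pi_pos], by linarith [hy.2]⟩ hxy

lemma sinsq_deriv : ∀ θ ∈ Ioo (0:ℝ) (π/2),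
    HasDerivWithinAt (fun θ : ℝ => Real.sin θ ^ 2) (2 * Real.sin θ * Real.cos θ) (Ioo 0 (π/2)) θ := by
  intro θ _
  have := ((Real.hasDerivAt_sin θ).pow 2)
  simpa [mul_comm, mul_assoc] using (show
    HasDerivWithinAt (fun θ : ℝ => Real.sin θ ^ 2) _ (Ioo 0 (π/2)) θ from this.hasDerivWithinAt)

/-- THE CORE identity, in ℝ≥0∞ -/
lemma core (r : ℕ) :
    ∑' n : ℕ, ENNReal.ofReal (Wc n * ((r.factorial:ℝ)/((n:ℝ)+1)^(r+1)))
      = ENNReal.ofReal ((2:ℝ)^(r+1)) *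
        ∫⁻ θ in Ioo (0:ℝ) (π/2), ENNReal.ofReal (θ * (-Real.log (Real.sin θ))^r) := by
  -- step 1: each term as a t-integral
  have step1 : ∀ n : ℕ, ENNReal.ofReal (Wc n * ((r.factorial:ℝ)/((n:ℝ)+1)^(r+1)))
      = ∫⁻ t in Ioo (0:ℝ) 1, ENNReal.ofReal ((-Real.log t)^r * (Wc n * t ^ n)) := by
    intro n
    have h1 : Wc n * ((r.factorial:ℝ)/((n:ℝ)+1)^(r+1))
        = ∫ t in Ioo (0:ℝ) 1, Wc n * (t^n * (-Real.log t)^r) := by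
      rw [MeasureTheory.integral_const_mul, V_value]
    rw [h1, MeasureTheory.ofReal_integral_eq_lintegral_ofReal
      ((V_integrable n r).const_mul _)
      (by
        filter_upwards [ae_restrict_mem measurableSet_Ioo] with t ht
        have hl : Real.log t ≤ 0 := Real.log_nonpos ht.1.le ht.2.le
        have h1 : (0:ℝ) ≤ t^n := pow_nonneg ht.1.le n
        have h2 : (0:ℝ) ≤ (-Real.log t)^r := pow_nonneg (by linarith) r
        exact mul_nonneg (Wc_nonneg n) (mul_nonneg h1 h2))]
    congr 1
    ext t
    congr 1
    ring
  simp_rw [step1]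
  rw [← MeasureTheory.lintegral_tsum (fun n => Measurable.aemeasurable (by
    apply Measurable.ennreal_ofReal
    exact ((Real.measurable_log.neg.pow_const _).mul
      ((measurable_const).mul (measurable_id.pow_const _)))))]
  -- step 2: pointwise evaluation of the inner sum
  have step2 : ∀ t ∈ Ioo (0:ℝ) 1,
      ∑' n : ℕ, ENNReal.ofReal ((-Real.log t)^r * (Wc n * t ^ n))
        = ENNReal.ofReal ((-Real.log t)^r * Gfun t) := by
    intro t ht
    have hl : (0:ℝ) ≤ (-Real.log t)^r :=
      pow_nonneg (by linarith [Real.log_nonpos ht.1.le ht.2.le]) r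
    calc ∑' n : ℕ, ENNReal.ofReal ((-Real.log t)^r * (Wc n * t ^ n))
        = ∑' n : ℕ, ENNReal.ofReal ((-Real.log t)^r) * ENNReal.ofReal (Wc n * t ^ n) := by
          congr 1; ext n; rw [ENNReal.ofReal_mul hl]
      _ = ENNReal.ofReal ((-Real.log t)^r) * ENNReal.ofReal (Gfun t) := by
          rw [ENNReal.tsum_mul_left, inner_swap t ht]
      _ = ENNReal.ofReal ((-Real.log t)^r * Gfun t) := (ENNReal.ofReal_mul hl).symm
  rw [MeasureTheory.setLIntegral_congr_fun measurableSet_Ioo step2]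
  -- step 3: change of variables t = sin θ ^ 2
  rw [← sinsq_image, lintegral_image_eq measurableSet_Ioo sinsq_deriv sinsq_inj]
  rw [← MeasureTheory.lintegral_const_mul _ (by
    apply Measurable.ennreal_ofReal
    exact measurable_id.mul ((Real.measurable_log.comp Real.measurable_sin).neg.pow_const _))]
  apply MeasureTheory.setLIntegral_congr_fun measurableSet_Ioo
  intro θ hθ
  obtain ⟨h1, h2⟩ := hθ
  have hs : 0 < Real.sin θ := Real.sin_pos_of_pos_of_lt_pi h1 (by linarith [Real.pi_pos])
  have hc : 0 < Real.cos θ := Real.cos_pos_of_mem_Ioo ⟨by linarith [Real.pi_pos], h2⟩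
  have habs : |2 * Real.sin θ * Real.cos θ| = 2 * Real.sin θ * Real.cos θ :=
    abs_of_pos (by positivity)
  beta_reduce
  rw [habs]
  -- simplify Gfun (sin θ ^ 2)
  have hcos2 : 1 - Real.sin θ ^ 2 = Real.cos θ ^ 2 := by
    have := Real.sin_sq_add_cos_sq θ; linarith
  have hGf : Gfun (Real.sin θ ^ 2) = θ / (Real.sin θ * Real.cos θ) := by
    unfold Gfun
    rw [hcos2]
    have e1 : Real.sqrt (Real.sin θ ^ 2 / Real.cos θ ^ 2) = Real.tan θ := by
      rw [show Real.sin θ ^ 2 / Real.cos θ ^ 2 = (Real.sin θ / Real.cos θ)^2 from by ring,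
        Real.sqrt_sq (by positivity), Real.tan_eq_sin_div_cos]
    have e2 : Real.sqrt (Real.sin θ ^ 2 * Real.cos θ ^ 2) = Real.sin θ * Real.cos θ := by
      rw [show Real.sin θ ^ 2 * Real.cos θ ^ 2 = (Real.sin θ * Real.cos θ)^2 from by ring,
        Real.sqrt_sq (by positivity)]
    rw [e1, e2, Real.arctan_tan (by linarith [Real.pi_pos]) h2]
  have hlog : (-Real.log (Real.sin θ ^ 2))^r = 2^r * (-Real.log (Real.sin θ))^r := by
    rw [Real.log_pow]
    push_cast
    rw [show -((2:ℝ) * Real.log (Real.sin θ)) = 2 * (-Real.log (Real.sin θ)) from by ring,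
      mul_pow]
  rw [← ENNReal.ofReal_mul (by positivity), ← ENNReal.ofReal_mul (by norm_num : (0:ℝ) ≤ (2:ℝ)^(r+1))]
  congr 1
  rw [hGf, hlog]
  field_simp
  ring

lemma term_nonneg (r n : ℕ) : 0 ≤ Wc n * ((r.factorial:ℝ)/((n:ℝ)+1)^(r+1)) :=
  mul_nonneg (Wc_nonneg n) (by positivity)

lemma fin_sum (r : ℕ) :
    ∑' n : ℕ, ENNReal.ofReal (Wc n * ((r.factorial:ℝ)/((n:ℝ)+1)^(r+1))) ≠ ⊤ := by
  apply ne_top_of_le_ne_top (b := ENNReal.ofReal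
    (∑' n : ℕ, 2*(r.factorial:ℝ)/(((n:ℝ)+1) * Real.sqrt ((n:ℝ)+1))))
  · exact ENNReal.ofReal_ne_top
  · rw [ENNReal.ofReal_tsum_of_nonneg (fun n => by positivity) (summable_bound r)]
    exact ENNReal.tsum_le_tsum (fun n => ENNReal.ofReal_le_ofReal (term_bound r n))

lemma logsin_nonneg {θ : ℝ} (hθ : θ ∈ Ioo (0:ℝ) (π/2)) (k : ℕ) :
    0 ≤ θ * (-Real.log (Real.sin θ))^k := by
  have hs : 0 < Real.sin θ := Real.sin_pos_of_pos_of_lt_pi hθ.1 (by linarith [Real.pi_pos, hθ.2])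
  have hl : Real.log (Real.sin θ) ≤ 0 := Real.log_nonpos hs.le (Real.sin_le_one θ)
  exact mul_nonneg hθ.1.le (pow_nonneg (by linarith) k)

lemma J_integrable (k : ℕ) :
    IntegrableOn (fun θ : ℝ => θ * (-Real.log (Real.sin θ))^k) (Ioo 0 (π/2)) := by
  have hmeas : AEStronglyMeasurable (fun θ : ℝ => θ * (-Real.log (Real.sin θ))^k)
      (volume.restrict (Ioo 0 (π/2))) := by
    apply Measurable.aestronglyMeasurable
    exact measurable_id.mul ((Real.measurable_log.comp Real.measurable_sin).neg.pow_const _)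
  refine ⟨hmeas, ?_⟩
  rw [MeasureTheory.hasFiniteIntegral_iff_ofReal (by
    filter_upwards [ae_restrict_mem measurableSet_Ioo] with θ hθ
    exact logsin_nonneg hθ k)]
  have hfin := fin_sum k
  rw [core k] at hfin
  have h2 : (ENNReal.ofReal ((2:ℝ)^(k+1))) ≠ 0 := (ENNReal.ofReal_pos.2 (by positivity)).ne'
  rw [lt_top_iff_ne_top]
  intro hL
  rw [hL, ENNReal.mul_top h2] at hfin
  exact hfin rfl

lemma J_lintegral (k : ℕ) :
    ENNReal.ofReal (∫ θ in Ioo (0:ℝ) (π/2), θ * (-Real.log (Real.sin θ))^k)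
      = ∫⁻ θ in Ioo (0:ℝ) (π/2), ENNReal.ofReal (θ * (-Real.log (Real.sin θ))^k) := by
  apply MeasureTheory.ofReal_integral_eq_lintegral_ofReal (J_integrable k)
  filter_upwards [ae_restrict_mem measurableSet_Ioo] with θ hθ
  exact logsin_nonneg hθ k

/-- real version of the core identity -/
lemma core_real (r : ℕ) :
    (r.factorial:ℝ) * (∑' n : ℕ, Wc n / ((n:ℝ)+1)^(r+1))
      = 2^(r+1) * ∫ θ in Ioo (0:ℝ) (π/2), θ * (-Real.log (Real.sin θ))^r := by
  have hJnn : 0 ≤ ∫ θ in Ioo (0:ℝ) (π/2), θ * (-Real.log (Real.sin θ))^r := by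
    apply MeasureTheory.integral_nonneg_of_ae
    filter_upwards [ae_restrict_mem measurableSet_Ioo] with θ hθ
    exact logsin_nonneg hθ r
  have h1 : (r.factorial:ℝ) * (∑' n : ℕ, Wc n / ((n:ℝ)+1)^(r+1))
      = (∑' n : ℕ, ENNReal.ofReal (Wc n * ((r.factorial:ℝ)/((n:ℝ)+1)^(r+1)))).toReal := by
    rw [ENNReal.tsum_toReal_eq (fun n => ENNReal.ofReal_ne_top)]
    rw [← tsum_mul_left]
    congr 1
    ext n
    rw [ENNReal.toReal_ofReal (term_nonneg r n)]
    ring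
  rw [h1, core r, ← J_lintegral r, ← ENNReal.ofReal_mul (by positivity),
    ENNReal.toReal_ofReal (by positivity)]

/-- hyp equals the tsum of Wc-terms -/
lemma hyp_eq (r : ℕ) :
    hyp (List.replicate (r + 3) (1 : ℝ)) ((3 / 2) :: List.replicate (r + 1) (2 : ℝ)) 1
      = ∑' n : ℕ, Wc n / ((n:ℝ)+1)^(r+1) := by
  unfold hyp
  apply tsum_congr
  intro n
  rw [term_eq r n]
  unfold Wc
  rw [div_div]

/-- interval-integrability of x * log(2 sin x)^j -/
lemma intInt (r j : ℕ) (hj : j ≤ r) :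
    IntervalIntegrable (fun x : ℝ => x * Real.log (2 * Real.sin x) ^ j) volume 0 (π/2) := by
  rw [intervalIntegrable_iff_integrableOn_Ioc_of_le (by positivity : (0:ℝ) ≤ π/2)]
  rw [integrableOn_Ioc_iff_integrableOn_Ioo]
  have hexp : ∀ x ∈ Ioo (0:ℝ) (π/2),
      (∑ i ∈ Finset.range (j+1), ((Real.log 2)^i * (j.choose i : ℝ) * (-1:ℝ)^(j-i)) *
        (x * (-Real.log (Real.sin x))^(j-i)))
      = x * Real.log (2 * Real.sin x) ^ j := by
    intro x hx
    have hs : 0 < Real.sin x := Real.sin_pos_of_pos_of_lt_pi hx.1 (by linarith [Real.pi_pos, hx.2])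
    rw [Real.log_mul (by norm_num) hs.ne', add_pow, Finset.mul_sum]
    apply Finset.sum_congr rfl
    intro i hi
    have hneg : ((-1:ℝ))^(j-i) * (-Real.log (Real.sin x))^(j-i)
        = (Real.log (Real.sin x))^(j-i) := by
      rw [← mul_pow]; norm_num
    calc ((Real.log 2)^i * (j.choose i : ℝ) * (-1:ℝ)^(j-i)) *
        (x * (-Real.log (Real.sin x))^(j-i))
        = ((Real.log 2)^i * (j.choose i : ℝ)) *
          (((-1:ℝ))^(j-i) * (-Real.log (Real.sin x))^(j-i)) * x := by ring
      _ = x * (Real.log 2 ^ i * Real.log (Real.sin x) ^ (j-i) * (j.choose i : ℝ)) := by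
          rw [hneg]; ring
  have hint : IntegrableOn (fun x : ℝ =>
      ∑ i ∈ Finset.range (j+1), ((Real.log 2)^i * (j.choose i : ℝ) * (-1:ℝ)^(j-i)) *
        (x * (-Real.log (Real.sin x))^(j-i))) (Ioo 0 (π/2)) := by
    exact MeasureTheory.integrable_finset_sum
      (f := fun i x => ((Real.log 2)^i * (j.choose i : ℝ) * (-1:ℝ)^(j-i)) *
        (x * (-Real.log (Real.sin x))^(j-i))) (Finset.range (j+1))
      (fun i _ => (J_integrable (j-i)).const_mul _)
  exact IntegrableOn.congr_fun hint hexp measurableSet_Ioo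

/-- the binomial-sum form of the log-sine integral -/
lemma rhs_eq (r : ℕ) :
    ∑ j ∈ Finset.range (r + 1), (r.choose j : ℝ) * (-Real.log 2) ^ (r - j) *
      ∫ x in (0:ℝ)..(π / 2), x * Real.log (2 * Real.sin x) ^ j
    = (-1)^r * ∫ θ in Ioo (0:ℝ) (π/2), θ * (-Real.log (Real.sin θ))^r := by
  have key : ∫ θ in Ioo (0:ℝ) (π/2), θ * (-Real.log (Real.sin θ))^r
      = (-1)^r * ∫ x in (0:ℝ)..(π/2), ∑ j ∈ Finset.range (r+1),
          (x * Real.log (2 * Real.sin x) ^ j) * ((-Real.log 2) ^ (r - j) * (r.choose j : ℝ)) := by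
    rw [intervalIntegral.integral_of_le (by positivity : (0:ℝ) ≤ π/2),
      MeasureTheory.integral_Ioc_eq_integral_Ioo, ← MeasureTheory.integral_const_mul]
    apply MeasureTheory.setIntegral_congr_fun measurableSet_Ioo
    intro x hx
    have hs : 0 < Real.sin x := Real.sin_pos_of_pos_of_lt_pi hx.1 (by linarith [Real.pi_pos, hx.2])
    have hl2 : Real.log (2 * Real.sin x) = Real.log 2 + Real.log (Real.sin x) :=
      Real.log_mul (by norm_num) hs.ne'
    have e : Real.log (Real.sin x) = Real.log (2 * Real.sin x) + (-Real.log 2) := by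
      rw [hl2]; ring
    calc x * (-Real.log (Real.sin x))^r
        = (-1)^r * (x * (Real.log (2 * Real.sin x) + (-Real.log 2))^r) := by
          rw [← e]; ring
      _ = (-1)^r * ∑ j ∈ Finset.range (r+1),
          (x * Real.log (2 * Real.sin x) ^ j) * ((-Real.log 2) ^ (r - j) * (r.choose j : ℝ)) := by
          rw [add_pow, Finset.mul_sum]
          congr 1
          apply Finset.sum_congr rfl
          intro i hi
          ring
  have h2 : ∑ j ∈ Finset.range (r + 1), (r.choose j : ℝ) * (-Real.log 2) ^ (r - j) *
      ∫ x in (0:ℝ)..(π / 2), x * Real.log (2 * Real.sin x) ^ j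
      = ∫ x in (0:ℝ)..(π/2), ∑ j ∈ Finset.range (r+1),
          (x * Real.log (2 * Real.sin x) ^ j) * ((-Real.log 2) ^ (r - j) * (r.choose j : ℝ)) := by
    rw [intervalIntegral.integral_finset_sum (fun j hj =>
      (intInt r j (by simpa [Nat.lt_succ_iff] using hj)).mul_const _)]
    apply Finset.sum_congr rfl
    intro j hj
    rw [intervalIntegral.integral_mul_const]
    ring
  rw [h2, key]
  rw [← mul_assoc, ← mul_pow]
  norm_num

/-- For every `r ≥ 0`,
`₍ᵣ₊₃₎F₍ᵣ₊₂₎({1}_{r+3}; 3/2, {2}_{r+1}; 1)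
  = (2^{r+1}(−1)^r/r!) Σ_{j=0}^r (r choose j)(−log 2)^{r−j} ∫₀^{π/2} x logʲ(2 sin x) dx`. -/
theorem logsine_rep (r : ℕ) :
    hyp (List.replicate (r + 3) (1 : ℝ)) ((3 / 2) :: List.replicate (r + 1) (2 : ℝ)) 1 =
      2 ^ (r + 1) * (-1) ^ r / (r.factorial : ℝ) *
        ∑ j ∈ Finset.range (r + 1), (r.choose j : ℝ) * (-Real.log 2) ^ (r - j) *
          ∫ x in (0:ℝ)..(π / 2), x * Real.log (2 * Real.sin x) ^ j := by
  rw [hyp_eq r, rhs_eq r]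
  have h := core_real r
  have hfac : ((r.factorial : ℝ)) ≠ 0 := Nat.cast_ne_zero.2 (Nat.factorial_ne_zero _)
  have hsq : ((-1:ℝ))^r * (-1:ℝ)^r = 1 := by rw [← mul_pow]; norm_num
  set J := ∫ θ in Ioo (0:ℝ) (π/2), θ * (-Real.log (Real.sin θ))^r with hJ
  calc (∑' n : ℕ, Wc n / ((n:ℝ)+1)^(r+1))
      = (r.factorial:ℝ)⁻¹ * ((r.factorial:ℝ) * ∑' n : ℕ, Wc n / ((n:ℝ)+1)^(r+1)) := by
        field_simp
    _ = (r.factorial:ℝ)⁻¹ * (2^(r+1) * J) := by rw [h]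
    _ = 2 ^ (r + 1) * (-1) ^ r / (r.factorial : ℝ) * ((-1)^r * J) := by
        rw [show (2:ℝ) ^ (r + 1) * (-1) ^ r / (r.factorial : ℝ) * ((-1)^r * J)
          = (r.factorial:ℝ)⁻¹ * (2^(r+1) * J) * ((-1:ℝ)^r * (-1:ℝ)^r) from by ring, hsq,
          mul_one]
end

section
/- For every real m > 0, ∫₀¹ K(1−x) · x^{m−1} dx = π Γ(m)² / (2 Γ(m + 1/2)²). -/
open scoped Real
open MeasureTheory Set intervalIntegral
open scoped Interval

/-- Integrability of the scaled Beta integrand. -/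
lemma betaR_integrable {a b s : ℝ} (ha : 0 < a) (hb : 0 < b) (hs : 0 < s) :
    IntervalIntegrable (fun x : ℝ => x ^ (a - 1) * (s - x) ^ (b - 1)) volume 0 s := by
  have h1 : IntervalIntegrable (fun x : ℝ => x ^ (a - 1) * (s - x) ^ (b - 1)) volume 0 (s/2) := by
    apply IntervalIntegrable.mul_continuousOn
    · exact intervalIntegral.intervalIntegrable_rpow' (by linarith)
    · apply ContinuousOn.rpow_const
      · exact (continuous_const.sub continuous_id).continuousOn
      · intro x hx
        rw [uIcc_of_le (by linarith : (0:ℝ) ≤ s/2)] at hx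
        left; intro h; nlinarith [hx.2]
  have h2 : IntervalIntegrable (fun x : ℝ => x ^ (a - 1) * (s - x) ^ (b - 1)) volume (s/2) s := by
    have base : IntervalIntegrable (fun x : ℝ => x ^ (b - 1)) volume 0 (s/2) :=
      intervalIntegral.intervalIntegrable_rpow' (by linarith)
    have comp' : IntervalIntegrable (fun x : ℝ => (s - x) ^ (b - 1)) volume (s/2) s := by
      have h := (base.comp_sub_left s).symm
      rwa [show s - s/2 = s/2 by ring, sub_zero] at h
    have := comp'.continuousOn_mul (g := fun x : ℝ => x ^ (a - 1)) ?_
    · simpa [mul_comm] using this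
    · apply ContinuousOn.rpow_const continuous_id.continuousOn
      intro x hx
      rw [uIcc_of_le (by linarith : s/2 ≤ s)] at hx
      left; intro h; simp only [id] at h; nlinarith [hx.1]
  exact h1.trans h2

/-- The scaled real Beta integral. -/
lemma betaR_eval {a b s : ℝ} (ha : 0 < a) (hb : 0 < b) (hs : 0 < s) :
    ∫ x in (0:ℝ)..s, x ^ (a - 1) * (s - x) ^ (b - 1)
      = s ^ (a + b - 1) * (Real.Gamma a * Real.Gamma b / Real.Gamma (a + b)) := by
  have key : (∫ x in (0:ℝ)..s, ((x ^ (a - 1) * (s - x) ^ (b - 1) : ℝ) : ℂ))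
      = ∫ x in (0:ℝ)..s, (x:ℂ) ^ ((a:ℂ) - 1) * ((s:ℂ) - x) ^ ((b:ℂ) - 1) := by
    apply intervalIntegral.integral_congr
    intro x hx
    rw [uIcc_of_le hs.le] at hx
    show ((x ^ (a-1) * (s-x) ^ (b-1) : ℝ) : ℂ) = (x:ℂ) ^ ((a:ℂ) - 1) * ((s:ℂ) - x) ^ ((b:ℂ) - 1)
    have h1 : ((x ^ (a-1) : ℝ) : ℂ) = (x:ℂ) ^ ((a:ℂ) - 1) := by
      rw [Complex.ofReal_cpow hx.1]; push_cast; ring_nf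
    have h2 : (((s - x) ^ (b-1) : ℝ) : ℂ) = ((s:ℂ) - x) ^ ((b:ℂ) - 1) := by
      rw [Complex.ofReal_cpow (by linarith [hx.2])]; push_cast; ring_nf
    rw [Complex.ofReal_mul, h1, h2]
  rw [intervalIntegral.integral_ofReal] at key
  rw [Complex.betaIntegral_scaled a b hs] at key
  have hG : Complex.Gamma ((a:ℂ) + (b:ℂ)) ≠ 0 := by
    have e : ((a:ℂ) + (b:ℂ)) = ((a + b : ℝ) : ℂ) := by push_cast; ring
    rw [e, Complex.Gamma_ofReal]
    exact_mod_cast (Real.Gamma_pos_of_pos (by linarith : (0:ℝ) < a + b)).ne'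
  have hbeta : Complex.betaIntegral a b
      = ((Real.Gamma a * Real.Gamma b / Real.Gamma (a + b) : ℝ) : ℂ) := by
    have h := Complex.Gamma_mul_Gamma_eq_betaIntegral
      (s := (a:ℂ)) (t := (b:ℂ)) (by simpa using ha) (by simpa using hb)
    rw [Complex.ofReal_div, Complex.ofReal_mul, ← Complex.Gamma_ofReal,
      ← Complex.Gamma_ofReal, ← Complex.Gamma_ofReal, Complex.ofReal_add,
      eq_div_iff hG, mul_comm]
    exact h.symm
  rw [hbeta] at key
  have hpow : ((s:ℂ)) ^ ((a:ℂ) + b - 1) = ((s ^ (a + b - 1) : ℝ) : ℂ) := by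
    rw [Complex.ofReal_cpow hs.le]; push_cast; ring_nf
  rw [hpow] at key
  exact_mod_cast key


/-- The complete elliptic integral of the first kind, in the parameter
(`m = k²`) convention: `K(m) = ∫₀^{π/2} (1 − m sin²θ)^{−1/2} dθ`. -/
noncomputable def ellipticK (m : ℝ) : ℝ :=
  ∫ θ in (0:ℝ)..(π / 2), (1 - m * Real.sin θ ^ 2) ^ (-(1:ℝ) / 2)

section A
variable {x : ℝ}

lemma h_integrableOn (hx0 : 0 < x) (hx1 : x < 1) :
    IntegrableOn (fun u : ℝ => (u * (1 - u) * (u - x)) ^ (-(1:ℝ) / 2)) (Ioo x 1) volume := by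
  have hb1 : IntervalIntegrable
      (fun v : ℝ => v ^ ((1:ℝ)/2 - 1) * ((1 - x) - v) ^ ((1:ℝ)/2 - 1)) volume 0 (1 - x) :=
    betaR_integrable one_half_pos one_half_pos (by linarith)
  have hb2 := hb1.comp_sub_right x
  rw [zero_add, show (1:ℝ) - x + x = 1 by ring] at hb2
  have hb3 : IntegrableOn
      (fun u : ℝ => (u - x) ^ ((1:ℝ)/2 - 1) * ((1 - x) - (u - x)) ^ ((1:ℝ)/2 - 1))
      (Ioo x 1) volume := hb2.1.mono_set Ioo_subset_Ioc_self
  have hbound : IntegrableOn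
      (fun u : ℝ => x ^ (-(1:ℝ)/2) *
        ((u - x) ^ ((1:ℝ)/2 - 1) * ((1 - x) - (u - x)) ^ ((1:ℝ)/2 - 1)))
      (Ioo x 1) volume := hb3.const_mul _
  refine Integrable.mono' hbound ?_ ?_
  · refine ContinuousOn.aestronglyMeasurable ?_ measurableSet_Ioo
    refine ContinuousOn.rpow_const ?_ ?_
    · fun_prop
    · rintro u ⟨hu1, hu2⟩
      left
      have : 0 < u * (1 - u) * (u - x) :=
        mul_pos (mul_pos (lt_trans hx0 hu1) (by linarith)) (by linarith)
      exact this.ne'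
  · rw [ae_restrict_iff' measurableSet_Ioo]
    refine Filter.Eventually.of_forall ?_
    rintro u ⟨hu1, hu2⟩
    have hu0 : 0 < u := lt_trans hx0 hu1
    have h1u : 0 < 1 - u := by linarith
    have hux : 0 < u - x := by linarith
    rw [Real.norm_eq_abs, abs_of_nonneg (Real.rpow_nonneg (by positivity) _)]
    have split : (u * (1 - u) * (u - x)) ^ (-(1:ℝ)/2)
        = u ^ (-(1:ℝ)/2) * ((1 - u) ^ (-(1:ℝ)/2) * (u - x) ^ (-(1:ℝ)/2)) := by
      rw [mul_assoc, Real.mul_rpow hu0.le (by positivity), Real.mul_rpow h1u.le hux.le]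
    rw [split, show ((1:ℝ) - x) - (u - x) = 1 - u by ring,
      show ((1:ℝ)/2 - 1) = (-(1:ℝ)/2) by norm_num]
    rw [mul_comm ((u - x) ^ (-(1:ℝ)/2))]
    refine mul_le_mul_of_nonneg_right ?_ (by positivity)
    exact Real.rpow_le_rpow_of_nonpos hx0 hu1.le (by norm_num)

lemma ellipticK_eq (hx0 : 0 < x) (hx1 : x < 1) :
    ellipticK (1 - x) = (1/2) * ∫ u in x..(1:ℝ), (u * (1 - u) * (u - x)) ^ (-(1:ℝ) / 2) := by
  set φ : ℝ → ℝ := fun θ => 1 - (1 - x) * Real.sin θ ^ 2 with hφdef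
  set φ' : ℝ → ℝ := fun θ => -((1 - x) * (2 * Real.sin θ * Real.cos θ)) with hφ'def
  set g : ℝ → ℝ := fun u => (1/2) * (u * (1 - u) * (u - x)) ^ (-(1:ℝ) / 2) with hgdef
  have h1x : 0 < 1 - x := by linarith
  have hrange : ∀ θ : ℝ, x ≤ φ θ ∧ φ θ ≤ 1 := by
    intro θ
    have h1 : Real.sin θ ^ 2 ≤ 1 := Real.sin_sq_le_one θ
    have h2 : 0 ≤ Real.sin θ ^ 2 := sq_nonneg _
    constructor <;> simp only [hφdef] <;> nlinarith [mul_nonneg h1x.le h2,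
      mul_nonneg h1x.le (sub_nonneg.mpr h1)]
  have himg : ∀ θ ∈ Ioo (0:ℝ) (π/2), φ θ ∈ Ioo x 1 := by
    rintro θ ⟨h1, h2⟩
    have hs : 0 < Real.sin θ := Real.sin_pos_of_pos_of_lt_pi h1 (by linarith [Real.pi_pos])
    have hc : 0 < Real.cos θ := Real.cos_pos_of_mem_Ioo ⟨by linarith [Real.pi_pos], h2⟩
    have hsc : Real.sin θ ^ 2 + Real.cos θ ^ 2 = 1 := Real.sin_sq_add_cos_sq θ
    have hs2 : Real.sin θ ^ 2 < 1 := by nlinarith [mul_pos hc hc]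
    have hs2' : 0 < Real.sin θ ^ 2 := by positivity
    constructor <;> simp only [hφdef] <;>
      nlinarith [mul_pos h1x hs2', mul_pos h1x (sub_pos.mpr hs2)]
  -- the key pointwise identity
  have hkey : ∀ θ ∈ Ioo (0:ℝ) (π/2),
      φ' θ • g (φ θ) = -((1 - (1 - x) * Real.sin θ ^ 2) ^ (-(1:ℝ) / 2)) := by
    rintro θ ⟨h1, h2⟩
    have hs : 0 < Real.sin θ := Real.sin_pos_of_pos_of_lt_pi h1 (by linarith [Real.pi_pos])
    have hc : 0 < Real.cos θ := Real.cos_pos_of_mem_Ioo ⟨by linarith [Real.pi_pos], h2⟩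
    have hsc : Real.sin θ ^ 2 + Real.cos θ ^ 2 = 1 := Real.sin_sq_add_cos_sq θ
    have hφpos : 0 < φ θ := lt_trans hx0 (himg θ ⟨h1, h2⟩).1
    have hB : 0 < (1 - x) * Real.sin θ * Real.cos θ := by positivity
    have hbase : φ θ * (1 - φ θ) * (φ θ - x)
        = φ θ * ((1 - x) * Real.sin θ * Real.cos θ) ^ 2 := by
      simp only [hφdef]
      linear_combination (-(1 - (1 - x) * Real.sin θ ^ 2) * (1 - x)^2 * Real.sin θ ^ 2) * hsc
    have E : (φ θ * ((1 - x) * Real.sin θ * Real.cos θ) ^ 2) ^ (-(1:ℝ)/2)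
        = φ θ ^ (-(1:ℝ)/2) * (((1 - x) * Real.sin θ * Real.cos θ) ^ 2) ^ (-(1:ℝ)/2) :=
      Real.mul_rpow hφpos.le (sq_nonneg _)
    have E2 : (((1 - x) * Real.sin θ * Real.cos θ) ^ 2 : ℝ) ^ (-(1:ℝ)/2)
        = ((1 - x) * Real.sin θ * Real.cos θ)⁻¹ := by
      rw [← Real.rpow_natCast ((1 - x) * Real.sin θ * Real.cos θ) 2,
        ← Real.rpow_mul hB.le, show ((2:ℕ):ℝ) * (-(1:ℝ)/2) = -1 by norm_num,
        Real.rpow_neg_one]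
    show φ' θ * g (φ θ) = -((1 - (1 - x) * Real.sin θ ^ 2) ^ (-(1:ℝ) / 2))
    simp only [hgdef, hφ'def]
    rw [hbase, E, E2]
    have hφθ : φ θ = 1 - (1 - x) * Real.sin θ ^ 2 := rfl
    rw [hφθ]
    field_simp
  -- derivative
  have hff' : ∀ θ ∈ Ioo (min (0:ℝ) (π/2)) (max (0:ℝ) (π/2)),
      HasDerivWithinAt φ (φ' θ) (Ioi θ) θ := by
    intro θ _
    have h := (((Real.hasDerivAt_sin θ).pow 2).const_mul (1 - x)).const_sub 1
    have : HasDerivAt φ (φ' θ) θ := by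
      refine h.congr_deriv ?_
      simp only [hφ'def]
      ring
    exact this.hasDerivWithinAt
  have hf : ContinuousOn φ [[(0:ℝ), π/2]] := by fun_prop
  have hgcont : ContinuousOn g (φ '' Ioo (min (0:ℝ) (π/2)) (max (0:ℝ) (π/2))) := by
    rw [min_eq_left (by positivity : (0:ℝ) ≤ π/2), max_eq_right (by positivity : (0:ℝ) ≤ π/2)]
    refine ContinuousOn.mono (s := Ioo x 1) ?_
      (by rintro u ⟨θ, hθ, rfl⟩; exact himg θ hθ)
    apply ContinuousOn.mul continuousOn_const
    refine ContinuousOn.rpow_const (by fun_prop) ?_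
    rintro u ⟨hu1, hu2⟩
    left
    have : 0 < u * (1 - u) * (u - x) :=
      mul_pos (mul_pos (lt_trans hx0 hu1) (by linarith)) (by linarith)
    exact this.ne'
  have hIoo := h_integrableOn hx0 hx1
  have hg1 : IntegrableOn g (φ '' [[(0:ℝ), π/2]]) volume := by
    have hsub : φ '' [[(0:ℝ), π/2]] ⊆ Icc x 1 := by
      rintro u ⟨θ, _, rfl⟩; exact ⟨(hrange θ).1, (hrange θ).2⟩
    refine IntegrableOn.mono_set ?_ hsub
    rw [integrableOn_Icc_iff_integrableOn_Ioo]
    exact hIoo.const_mul (1/2)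
  have hg2 : IntegrableOn (fun θ => φ' θ • (g ∘ φ) θ) [[(0:ℝ), π/2]] volume := by
    have hcont : Continuous (fun θ : ℝ => -((1 - (1 - x) * Real.sin θ ^ 2) ^ (-(1:ℝ) / 2))) := by
      apply Continuous.neg
      apply Continuous.rpow_const (by fun_prop)
      intro θ
      left
      have := (hrange θ).1
      simp only [hφdef] at this
      exact (lt_of_lt_of_le hx0 this).ne'
    have h2 : ∀ᵐ θ : ℝ ∂volume, θ ∉ ({0, π/2} : Set ℝ) := by
      have hnull : volume ({0, π/2} : Set ℝ) = 0 := (Set.toFinite _).measure_zero volume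
      exact measure_eq_zero_iff_ae_notMem.mp hnull
    have hae : (fun θ : ℝ => -((1 - (1 - x) * Real.sin θ ^ 2) ^ (-(1:ℝ) / 2)))
        =ᵐ[volume.restrict (Icc (0:ℝ) (π/2))] (fun θ => φ' θ • (g ∘ φ) θ) := by
      rw [Filter.EventuallyEq, ae_restrict_iff' measurableSet_Icc]
      filter_upwards [h2] with θ hθ hmem
      simp only [mem_insert_iff, mem_singleton_iff, not_or] at hθ
      exact (hkey θ ⟨lt_of_le_of_ne hmem.1 (Ne.symm hθ.1), lt_of_le_of_ne hmem.2 hθ.2⟩).symm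
    rw [uIcc_of_le (by positivity : (0:ℝ) ≤ π/2)]
    exact (hcont.integrableOn_Icc).congr hae
  have sub := intervalIntegral.integral_comp_smul_deriv''' hf hff' hgcont hg1 hg2
  have hφ0 : φ 0 = 1 := by simp [hφdef]
  have hφπ : φ (π/2) = x := by simp [hφdef]
  rw [hφ0, hφπ] at sub
  have lhs_eq : (∫ θ in (0:ℝ)..(π/2), φ' θ • (g ∘ φ) θ)
      = ∫ θ in (0:ℝ)..(π/2), -((1 - (1 - x) * Real.sin θ ^ 2) ^ (-(1:ℝ) / 2)) := by
    apply intervalIntegral.integral_congr_ae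
    have h2 : ∀ᵐ θ : ℝ ∂volume, θ ≠ π/2 := by
      refine ae_iff.mpr ?_
      simp [Real.volume_singleton]
    filter_upwards [h2] with θ hθ hmem
    rw [uIoc_of_le (by positivity : (0:ℝ) ≤ π/2)] at hmem
    exact hkey θ ⟨hmem.1, lt_of_le_of_ne hmem.2 hθ⟩
  rw [lhs_eq, intervalIntegral.integral_neg, intervalIntegral.integral_symm x 1] at sub
  have hmain : (∫ θ in (0:ℝ)..(π/2), (1 - (1 - x) * Real.sin θ ^ 2) ^ (-(1:ℝ) / 2))
      = ∫ u in x..(1:ℝ), g u := by linarith [sub]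
  calc ellipticK (1 - x)
      = ∫ u in x..(1:ℝ), (1/2) * (u * (1 - u) * (u - x)) ^ (-(1:ℝ) / 2) := hmain
    _ = (1/2) * ∫ u in x..(1:ℝ), (u * (1 - u) * (u - x)) ^ (-(1:ℝ) / 2) :=
        intervalIntegral.integral_const_mul _ _
end A


/-- For every real `m > 0`, `∫₀¹ K(1−x) x^{m−1} dx = π Γ(m)² / (2 Γ(m+1/2)²)`. -/
theorem ellipticK_moment (m : ℝ) (hm : 0 < m) :
    ∫ x in (0:ℝ)..1, ellipticK (1 - x) * x ^ (m - 1) =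
      π * Real.Gamma m ^ 2 / (2 * Real.Gamma (m + 1 / 2) ^ 2) := by
  have hm2 : (0:ℝ) < m + 1/2 := by linarith
  set B : ℝ := Real.Gamma m * Real.Gamma (1/2) / Real.Gamma (m + 1/2) with hB
  set F : ℝ → ℝ → ℝ := fun x u =>
    if x < u then x ^ (m-1) * (u * (1-u) * (u-x)) ^ (-(1:ℝ)/2) else 0 with hF
  have hFmeas : Measurable (Function.uncurry F) := by
    have he : Function.uncurry F = fun p : ℝ × ℝ =>
        if p.1 < p.2 then p.1 ^ (m-1) * (p.2 * (1-p.2) * (p.2-p.1)) ^ (-(1:ℝ)/2) else 0 := rfl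
    rw [he]
    refine Measurable.ite (measurableSet_lt measurable_fst measurable_snd) ?_ measurable_const
    fun_prop
  have hbeta_int : ∀ s : ℝ, 0 < s → IntegrableOn
      (fun x : ℝ => x ^ (m-1) * (s - x) ^ ((1:ℝ)/2 - 1)) (Ioo 0 s) volume := fun s hs =>
    ((betaR_integrable hm one_half_pos hs).1).mono_set Ioo_subset_Ioc_self
  -- slice representation as indicator
  have hFx : ∀ u : ℝ, (fun x => F x u) = (Iio u).indicator
      (fun x => x ^ (m-1) * (u * (1-u) * (u-x)) ^ (-(1:ℝ)/2)) := by
    intro u; funext x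
    by_cases h : x < u <;> simp [hF, indicator_apply, mem_Iio, h]
  have hset : ∀ u ∈ Ioo (0:ℝ) 1, Iio u ∩ Ioo 0 1 = Ioo 0 u := by
    rintro u ⟨hu0, hu1⟩
    ext y
    simp only [mem_inter_iff, mem_Iio, mem_Ioo]
    constructor
    · rintro ⟨h1, h2, _⟩; exact ⟨h2, h1⟩
    · rintro ⟨h1, h2⟩; exact ⟨h2, h1, lt_trans h2 hu1⟩
  -- pointwise splitting of the slice integrand
  have hptw : ∀ u ∈ Ioo (0:ℝ) 1, ∀ x ∈ Ioo (0:ℝ) u,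
      x ^ (m-1) * (u * (1-u) * (u-x)) ^ (-(1:ℝ)/2)
        = (u * (1-u)) ^ (-(1:ℝ)/2) * (x ^ (m-1) * (u-x) ^ ((1:ℝ)/2 - 1)) := by
    rintro u ⟨hu0, hu1⟩ x ⟨hx0, hxu⟩
    have hsplit : (u * (1-u) * (u-x)) ^ (-(1:ℝ)/2)
        = (u * (1-u)) ^ (-(1:ℝ)/2) * (u-x) ^ (-(1:ℝ)/2) :=
      Real.mul_rpow (by nlinarith) (by linarith)
    rw [hsplit, show ((1:ℝ)/2 - 1) = -(1:ℝ)/2 by norm_num]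
    ring
  -- slice integrability
  have hslice_int : ∀ u ∈ Ioo (0:ℝ) 1,
      Integrable (fun x => F x u) (volume.restrict (Ioo (0:ℝ) 1)) := by
    intro u hu
    rw [hFx u, integrable_indicator_iff measurableSet_Iio, IntegrableOn,
      Measure.restrict_restrict measurableSet_Iio, hset u hu]
    refine (((hbeta_int u hu.1).const_mul ((u * (1-u)) ^ (-(1:ℝ)/2)))).congr ?_
    rw [Filter.EventuallyEq, ae_restrict_iff' measurableSet_Ioo]
    exact Filter.Eventually.of_forall fun x hx => (hptw u hu x hx).symm
  -- slice value
  have hslice_val : ∀ u ∈ Ioo (0:ℝ) 1,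
      (∫ x in Ioo (0:ℝ) 1, F x u) = B * (u ^ (m-1) * (1-u) ^ (-(1:ℝ)/2)) := by
    intro u hu
    rw [hFx u, MeasureTheory.integral_indicator measurableSet_Iio,
      Measure.restrict_restrict measurableSet_Iio, hset u hu]
    rw [setIntegral_congr_fun measurableSet_Ioo (hptw u hu), MeasureTheory.integral_const_mul,
      ← integral_Ioc_eq_integral_Ioo, ← intervalIntegral.integral_of_le hu.1.le,
      betaR_eval hm one_half_pos hu.1]
    have e1 : (u * (1-u)) ^ (-(1:ℝ)/2) = u ^ (-(1:ℝ)/2) * (1-u) ^ (-(1:ℝ)/2) :=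
      Real.mul_rpow hu.1.le (by linarith [hu.2])
    have e2 : u ^ (-(1:ℝ)/2) * u ^ (m + 1/2 - 1) = u ^ (m-1) := by
      rw [← Real.rpow_add hu.1, show -(1:ℝ)/2 + (m + 1/2 - 1) = m - 1 by ring]
    rw [e1, show u ^ (-(1:ℝ)/2) * (1-u) ^ (-(1:ℝ)/2) * (u ^ (m + 1/2 - 1) * B)
      = B * ((u ^ (-(1:ℝ)/2) * u ^ (m + 1/2 - 1)) * (1-u) ^ (-(1:ℝ)/2)) from by ring, e2]
  -- outer integrand integrability
  have hout : Integrable (fun u : ℝ => B * (u ^ (m-1) * (1-u) ^ (-(1:ℝ)/2)))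
      (volume.restrict (Ioo (0:ℝ) 1)) := by
    have h := (hbeta_int 1 one_pos).const_mul B
    simp only [show ((1:ℝ)/2 - 1) = -(1:ℝ)/2 by norm_num] at h
    exact h
  -- product integrability
  have hprod : Integrable (Function.uncurry F)
      ((volume.restrict (Ioo (0:ℝ) 1)).prod (volume.restrict (Ioo (0:ℝ) 1))) := by
    rw [integrable_prod_iff' hFmeas.aestronglyMeasurable]
    constructor
    · rw [ae_restrict_iff' measurableSet_Ioo]
      exact Filter.Eventually.of_forall fun u hu => hslice_int u hu
    · refine hout.congr ?_
      rw [Filter.EventuallyEq, ae_restrict_iff' measurableSet_Ioo]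
      refine Filter.Eventually.of_forall fun u hu => ?_
      have hnorm : ∀ᵐ x ∂(volume.restrict (Ioo (0:ℝ) 1)),
          ‖Function.uncurry F (x, u)‖ = F x u := by
        rw [ae_restrict_iff' measurableSet_Ioo]
        refine Filter.Eventually.of_forall fun x hx => ?_
        show ‖F x u‖ = F x u
        rw [Real.norm_eq_abs, abs_of_nonneg]
        by_cases h : x < u
        · simp only [hF, if_pos h]
          have h1 : (0:ℝ) ≤ x := hx.1.le
          have h2 : (0:ℝ) ≤ u * (1-u) * (u-x) :=
            mul_nonneg (mul_nonneg hu.1.le (by linarith [hu.2])) (by linarith)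
          positivity
        · simp [hF, h]
      rw [← hslice_val u hu]
      exact (integral_congr_ae ((hnorm.mono fun x hx => hx))).symm
  -- main computation
  have h1 : ∀ x ∈ Ioo (0:ℝ) 1, ellipticK (1-x) * x ^ (m-1)
      = (1/2) * ∫ u in Ioo (0:ℝ) 1, F x u := by
    intro x hx
    have hK := ellipticK_eq hx.1 hx.2
    have hFu : (fun u => F x u) = (Ioi x).indicator
        (fun u => x ^ (m-1) * (u * (1-u) * (u-x)) ^ (-(1:ℝ)/2)) := by
      funext u
      by_cases h : x < u <;> simp [hF, indicator_apply, mem_Ioi, h]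
    have hset2 : Ioi x ∩ Ioo 0 1 = Ioo x 1 := by
      ext y
      simp only [mem_inter_iff, mem_Ioi, mem_Ioo]
      constructor
      · rintro ⟨h1, _, h3⟩; exact ⟨h1, h3⟩
      · rintro ⟨h1, h2⟩; exact ⟨h1, lt_trans hx.1 h1, h2⟩
    have hIu : ∫ u in Ioo (0:ℝ) 1, F x u
        = x ^ (m-1) * ∫ u in x..(1:ℝ), (u * (1-u) * (u-x)) ^ (-(1:ℝ)/2) := by
      rw [hFu, MeasureTheory.integral_indicator measurableSet_Ioi,
        Measure.restrict_restrict measurableSet_Ioi, hset2, MeasureTheory.integral_const_mul,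
        intervalIntegral.integral_of_le hx.2.le, integral_Ioc_eq_integral_Ioo]
    rw [hIu, hK]; ring
  calc ∫ x in (0:ℝ)..1, ellipticK (1 - x) * x ^ (m - 1)
      = ∫ x in Ioo (0:ℝ) 1, ellipticK (1-x) * x ^ (m-1) := by
        rw [intervalIntegral.integral_of_le zero_le_one, integral_Ioc_eq_integral_Ioo]
    _ = ∫ x in Ioo (0:ℝ) 1, (1/2) * ∫ u in Ioo (0:ℝ) 1, F x u :=
        setIntegral_congr_fun measurableSet_Ioo h1
    _ = (1/2) * ∫ x in Ioo (0:ℝ) 1, ∫ u in Ioo (0:ℝ) 1, F x u := MeasureTheory.integral_const_mul _ _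
    _ = (1/2) * ∫ u in Ioo (0:ℝ) 1, ∫ x in Ioo (0:ℝ) 1, F x u := by
        rw [integral_integral_swap hprod]
    _ = (1/2) * ∫ u in Ioo (0:ℝ) 1, B * (u ^ (m-1) * (1-u) ^ (-(1:ℝ)/2)) := by
        rw [setIntegral_congr_fun measurableSet_Ioo hslice_val]
    _ = (1/2) * (B * ∫ u in Ioo (0:ℝ) 1, u ^ (m-1) * (1-u) ^ (-(1:ℝ)/2)) := by
        rw [MeasureTheory.integral_const_mul]
    _ = (1/2) * (B * B) := by
        have hBint : ∫ u in Ioo (0:ℝ) 1, u ^ (m-1) * (1-u) ^ (-(1:ℝ)/2) = B := by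
          rw [show (-(1:ℝ)/2) = ((1:ℝ)/2 - 1) by norm_num, ← integral_Ioc_eq_integral_Ioo,
            ← intervalIntegral.integral_of_le zero_le_one]
          have := betaR_eval hm one_half_pos one_pos
          rw [this, Real.one_rpow, one_mul]
        rw [hBint]
    _ = π * Real.Gamma m ^ 2 / (2 * Real.Gamma (m + 1 / 2) ^ 2) := by
        rw [hB, Real.Gamma_one_half_eq]
        have hG : Real.Gamma (m + 1/2) ≠ 0 := (Real.Gamma_pos_of_pos hm2).ne'
        have hpi : Real.sqrt π ^ 2 = π := Real.sq_sqrt Real.pi_pos.le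
        rw [div_mul_div_comm,
          show Real.Gamma m * Real.sqrt π * (Real.Gamma m * Real.sqrt π)
            = π * Real.Gamma m ^ 2 from by linear_combination (Real.Gamma m ^ 2) * hpi]
        field_simp
end

section
/- For every real m > 0, ∫₀¹ x^{m−1} arccos(x) dx = √π · Γ((m+1)/2) / (m² Γ(m/2)). -/
open scoped Real
open MeasureTheory intervalIntegral Set

lemma realBeta {u v : ℝ} (hu : 0 < u) (hv : 0 < v) :
    ∫ x in (0:ℝ)..1, x ^ (u - 1) * (1 - x) ^ (v - 1) =
      Real.Gamma u * Real.Gamma v / Real.Gamma (u + v) := by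
  have key := Complex.Gamma_mul_Gamma_eq_betaIntegral (s := (u:ℂ)) (t := (v:ℂ))
    (by simpa using hu) (by simpa using hv)
  have hint : Complex.betaIntegral (u:ℂ) (v:ℂ) =
      ((∫ x in (0:ℝ)..1, x ^ (u - 1) * (1 - x) ^ (v - 1) : ℝ) : ℂ) := by
    rw [Complex.betaIntegral, ← intervalIntegral.integral_ofReal]
    refine intervalIntegral.integral_congr fun x hx => ?_
    rw [Set.uIcc_of_le (by norm_num : (0:ℝ) ≤ 1)] at hx
    rw [show ((u:ℂ) - 1) = ((u - 1 : ℝ) : ℂ) by push_cast; ring,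
      show ((v:ℂ) - 1) = ((v - 1 : ℝ) : ℂ) by push_cast; ring,
      show ((1:ℂ) - (x:ℂ)) = ((1 - x : ℝ) : ℂ) by push_cast; ring,
      ← Complex.ofReal_cpow hx.1 (u - 1),
      ← Complex.ofReal_cpow (by linarith [hx.2] : (0:ℝ) ≤ 1 - x) (v - 1),
      ← Complex.ofReal_mul]
  rw [hint, ← Complex.ofReal_add, Complex.Gamma_ofReal, Complex.Gamma_ofReal,
    Complex.Gamma_ofReal] at key
  have hG : Real.Gamma (u + v) ≠ 0 := (Real.Gamma_pos_of_pos (by linarith)).ne'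
  have : Real.Gamma u * Real.Gamma v =
      Real.Gamma (u + v) * ∫ x in (0:ℝ)..1, x ^ (u - 1) * (1 - x) ^ (v - 1) := by
    exact_mod_cast key
  field_simp [this]
  rw [this]; ring

lemma g_integrable {m : ℝ} (hm : 0 < m) :
    IntervalIntegrable (fun t : ℝ => t ^ m * (1 - t ^ 2) ^ (-(1/2) : ℝ)) volume 0 1 := by
  have hmaj : IntervalIntegrable (fun t : ℝ => (1 - t) ^ (-(1/2) : ℝ)) volume 0 1 := by
    have := ((intervalIntegrable_rpow' (a := 0) (b := 1) (r := -(1/2))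
      (by norm_num)).comp_sub_left 1).symm
    simpa using this
  refine hmaj.mono_fun ?_ ?_
  · apply Measurable.aestronglyMeasurable
    fun_prop
  · rw [Filter.EventuallyLE, ae_restrict_iff' measurableSet_uIoc]
    filter_upwards with t ht
    rw [Set.uIoc_of_le (by norm_num : (0:ℝ) ≤ 1)] at ht
    obtain ⟨ht0, ht1⟩ := ht
    have h2 : (0:ℝ) ≤ 1 - t ^ 2 := by nlinarith
    rw [Real.norm_eq_abs, Real.norm_eq_abs,
      abs_of_nonneg (mul_nonneg (Real.rpow_nonneg ht0.le _) (Real.rpow_nonneg h2 _)),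
      abs_of_nonneg (Real.rpow_nonneg (by linarith) _)]
    have htm : t ^ m ≤ 1 := Real.rpow_le_one ht0.le ht1 hm.le
    have hle : (1 - t ^ 2) ^ (-(1/2) : ℝ) ≤ (1 - t) ^ (-(1/2) : ℝ) := by
      rcases eq_or_lt_of_le ht1 with h | h
      · rw [h]; norm_num
      · apply Real.rpow_le_rpow_of_nonpos (by nlinarith) (by nlinarith) (by norm_num)
    calc t ^ m * (1 - t ^ 2) ^ (-(1/2) : ℝ) ≤ 1 * (1 - t) ^ (-(1/2) : ℝ) :=
          mul_le_mul htm hle (Real.rpow_nonneg h2 _) (by norm_num)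
      _ = (1 - t) ^ (-(1/2) : ℝ) := one_mul _

lemma subst_sq {m : ℝ} (hm : 0 < m) :
    ∫ x in (0:ℝ)..1, x ^ ((m - 1)/2) * (1 - x) ^ (-(1/2) : ℝ) =
      2 * ∫ t in (0:ℝ)..1, t ^ m * (1 - t ^ 2) ^ (-(1/2) : ℝ) := by
  have himg : (fun t : ℝ => t ^ 2) '' Ioo 0 1 = Ioo 0 1 := by
    ext x
    constructor
    · rintro ⟨t, ⟨ht0, ht1⟩, rfl⟩
      refine ⟨by positivity, ?_⟩
      show t ^ 2 < 1
      nlinarith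
    · rintro ⟨hx0, hx1⟩
      exact ⟨Real.sqrt x, ⟨Real.sqrt_pos.2 hx0,
        (Real.sqrt_lt' one_pos).2 (by nlinarith)⟩, Real.sq_sqrt hx0.le⟩
  have hinj : Set.InjOn (fun t : ℝ => t ^ 2) (Ioo 0 1) := by
    intro a ha b hb hab
    simp only at hab
    exact le_antisymm (by nlinarith [ha.1, hb.1]) (by nlinarith [ha.1, hb.1])
  have hderiv : ∀ t ∈ Ioo (0:ℝ) 1, HasDerivWithinAt (fun t : ℝ => t ^ 2) (2 * t) (Ioo 0 1) t :=
    fun t _ => by simpa using (hasDerivAt_pow 2 t).hasDerivWithinAt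
  have key := integral_image_eq_integral_abs_deriv_smul measurableSet_Ioo hderiv hinj
    (fun x : ℝ => x ^ ((m - 1)/2) * (1 - x) ^ (-(1/2) : ℝ))
  rw [himg] at key
  rw [intervalIntegral.integral_of_le (by norm_num : (0:ℝ) ≤ 1),
    intervalIntegral.integral_of_le (by norm_num : (0:ℝ) ≤ 1),
    integral_Ioc_eq_integral_Ioo, integral_Ioc_eq_integral_Ioo, key,
    ← MeasureTheory.integral_const_mul]
  refine setIntegral_congr_fun measurableSet_Ioo fun t ht => ?_
  obtain ⟨ht0, ht1⟩ := ht
  have h1 : (t ^ 2 : ℝ) ^ ((m - 1)/2) = t ^ (m - 1) := by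
    rw [← Real.rpow_natCast t 2, ← Real.rpow_mul ht0.le]
    norm_num
    congr 1
    ring
  have h3 : t * t ^ (m - 1) = t ^ m := by
    rw [show m = 1 + (m - 1) by ring, Real.rpow_add ht0, Real.rpow_one]
    ring_nf
  simp only [smul_eq_mul, abs_of_pos (by linarith : (0:ℝ) < 2 * t), h1]
  rw [show 2 * t * (t ^ (m - 1) * (1 - t ^ 2) ^ (-(1/2) : ℝ)) =
      2 * ((t * t ^ (m - 1)) * (1 - t ^ 2) ^ (-(1/2) : ℝ)) by ring, h3]

lemma arccos_integrand_integrable {m : ℝ} (hm : 0 < m) :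
    IntervalIntegrable (fun x : ℝ => x ^ (m - 1) * Real.arccos x) volume 0 1 := by
  have hmaj : IntervalIntegrable (fun x : ℝ => x ^ (m - 1) * π) volume 0 1 :=
    (intervalIntegrable_rpow' (by linarith)).mul_const π
  refine hmaj.mono_fun ?_ ?_
  · apply Measurable.aestronglyMeasurable
    exact (measurable_id.pow_const (m-1)).mul Real.continuous_arccos.measurable
  · rw [Filter.EventuallyLE, ae_restrict_iff' measurableSet_uIoc]
    filter_upwards with x hx
    rw [Set.uIoc_of_le (by norm_num : (0:ℝ) ≤ 1)] at hx
    rw [Real.norm_eq_abs, Real.norm_eq_abs,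
      abs_of_nonneg (mul_nonneg (Real.rpow_nonneg hx.1.le _) (Real.arccos_nonneg x)),
      abs_of_nonneg (mul_nonneg (Real.rpow_nonneg hx.1.le _) Real.pi_pos.le)]
    exact mul_le_mul_of_nonneg_left (Real.arccos_le_pi x) (Real.rpow_nonneg hx.1.le _)

lemma main_ftc {m : ℝ} (hm : 0 < m) :
    ∫ x in (0:ℝ)..1, x ^ (m - 1) * Real.arccos x =
      (1/m) * ∫ t in (0:ℝ)..1, t ^ m * (1 - t ^ 2) ^ (-(1/2) : ℝ) := by
  set g : ℝ → ℝ := fun t => t ^ m * (1 - t ^ 2) ^ (-(1/2) : ℝ) with hg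
  set F : ℝ → ℝ := fun x => x ^ m * Real.arccos x / m + (1/m) * ∫ t in (0:ℝ)..x, g t with hF
  have hgi : IntervalIntegrable g volume 0 1 := g_integrable hm
  have hFcont : ContinuousOn F (Icc 0 1) := by
    apply ContinuousOn.add
    · apply ContinuousOn.div_const
      exact ContinuousOn.mul (fun x _ => (Real.continuousAt_rpow_const x m
        (Or.inr hm.le)).continuousWithinAt) Real.continuous_arccos.continuousOn
    · apply continuousOn_const.mul
      have := intervalIntegral.continuousOn_primitive_interval' hgi
        (left_mem_uIcc : (0:ℝ) ∈ uIcc 0 1)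
      simpa [Set.uIcc_of_le (by norm_num : (0:ℝ) ≤ 1)] using this
  have hderiv : ∀ x ∈ Ioo (0:ℝ) 1, HasDerivAt F (x ^ (m - 1) * Real.arccos x) x := by
    intro x hx
    obtain ⟨hx0, hx1⟩ := hx
    have hx2 : (0:ℝ) < 1 - x ^ 2 := by nlinarith
    have hsub : ContinuousAt (fun t : ℝ => 1 - t ^ 2) x := by fun_prop
    have hc2 : ContinuousAt (fun t : ℝ => (1 - t ^ 2) ^ (-(1/2) : ℝ)) x :=
      hsub.rpow_const (Or.inl hx2.ne')
    have hca : ContinuousAt g x :=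
      (Real.continuousAt_rpow_const x m (Or.inl hx0.ne')).mul hc2
    have hmono : IntervalIntegrable g volume 0 x := by
      apply hgi.mono_set
      rw [Set.uIcc_of_le hx0.le, Set.uIcc_of_le (by norm_num : (0:ℝ) ≤ 1)]
      exact Icc_subset_Icc le_rfl hx1.le
    have hprim : HasDerivAt (fun u => ∫ t in (0:ℝ)..u, g t) (g x) x :=
      intervalIntegral.integral_hasDerivAt_right hmono
        ((by fun_prop : Measurable g).stronglyMeasurable.stronglyMeasurableAtFilter) hca
    have h1 : HasDerivAt (fun y : ℝ => y ^ m) (m * x ^ (m - 1)) x :=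
      Real.hasDerivAt_rpow_const (Or.inl hx0.ne')
    have h2 : HasDerivAt Real.arccos (-(1 / Real.sqrt (1 - x ^ 2))) x :=
      Real.hasDerivAt_arccos (by nlinarith) (by nlinarith)
    have hd := (((h1.mul h2).div_const m).add (hprim.const_mul (1/m)) : HasDerivAt F
      ((m * x ^ (m - 1) * Real.arccos x + x ^ m * -(1 / Real.sqrt (1 - x ^ 2))) / m
        + (1/m) * g x) x)
    convert hd using 1
    · rfl
    · rfl
    · rfl
    have hsqrt : Real.sqrt (1 - x ^ 2) = (1 - x ^ 2) ^ ((1:ℝ)/2) := Real.sqrt_eq_rpow _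
    have hsne : (0:ℝ) < (1 - x ^ 2) ^ ((1:ℝ)/2) := Real.rpow_pos_of_pos hx2 _
    have hneg : (1 - x ^ 2) ^ (-(1/2) : ℝ) = ((1 - x ^ 2) ^ ((1:ℝ)/2))⁻¹ := by
      rw [← Real.rpow_neg hx2.le]
    have hxm : x ^ m = x * x ^ (m - 1) := by
      nth_rewrite 1 [show m = 1 + (m - 1) by ring]
      rw [Real.rpow_add hx0, Real.rpow_one]
    rw [hg]
    simp only [hsqrt, hneg, hxm]
    field_simp
    ring
  have ha : Filter.Tendsto F (nhdsWithin 0 (Ioi 0)) (nhds 0) := by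
    have h0 : F 0 = 0 := by
      simp [hF, Real.zero_rpow hm.ne', intervalIntegral.integral_same]
    have h := (hFcont.continuousWithinAt (show (0:ℝ) ∈ Icc 0 1 by norm_num))
    rw [← nhdsWithin_Ioo_eq_nhdsGT (by norm_num : (0:ℝ) < 1)]
    rw [ContinuousWithinAt, h0] at h
    exact h.mono_left (nhdsWithin_mono _ Ioo_subset_Icc_self)
  have hb : Filter.Tendsto F (nhdsWithin 1 (Iio 1))
      (nhds ((1/m) * ∫ t in (0:ℝ)..1, g t)) := by
    have h1 : F 1 = (1/m) * ∫ t in (0:ℝ)..1, g t := by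
      simp [hF, Real.arccos_one]
    have h := (hFcont.continuousWithinAt (show (1:ℝ) ∈ Icc 0 1 by norm_num))
    rw [← nhdsWithin_Ioo_eq_nhdsLT (by norm_num : (0:ℝ) < 1)]
    rw [ContinuousWithinAt, h1] at h
    exact h.mono_left (nhdsWithin_mono _ Ioo_subset_Icc_self)
  have key := intervalIntegral.integral_eq_sub_of_hasDerivAt_of_tendsto
    (by norm_num : (0:ℝ) < 1) hderiv (arccos_integrand_integrable hm) ha hb
  rw [key, sub_zero]

/-- For every real `m > 0`, `∫₀¹ x^{m−1} arccos(x) dx = √π Γ((m+1)/2) / (m² Γ(m/2))`. -/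
theorem arccos_moment (m : ℝ) (hm : 0 < m) :
    ∫ x in (0:ℝ)..1, x ^ (m - 1) * Real.arccos x =
      Real.sqrt π * Real.Gamma ((m + 1) / 2) / (m ^ 2 * Real.Gamma (m / 2)) := by
  rw [main_ftc hm]
  have hbeta := realBeta (u := (m + 1)/2) (v := 1/2) (by linarith) (by norm_num)
  rw [show (m + 1)/2 - 1 = (m - 1)/2 by ring, show (1:ℝ)/2 - 1 = -(1/2) by norm_num,
    subst_sq hm, show (m + 1)/2 + 1/2 = m/2 + 1 by ring,
    Real.Gamma_add_one (by positivity : (m/2 : ℝ) ≠ 0), Real.Gamma_one_half_eq] at hbeta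
  have hGpos : 0 < Real.Gamma (m/2) := Real.Gamma_pos_of_pos (by positivity)
  have hJ : ∫ t in (0:ℝ)..1, t ^ m * (1 - t ^ 2) ^ (-(1/2) : ℝ) =
      Real.Gamma ((m + 1)/2) * Real.sqrt π / (m/2 * Real.Gamma (m/2)) / 2 := by
    linarith [hbeta]
  rw [hJ]
  field_simp
end

section
/- For every real x with 0 < |x| ≤ 1, the following two identities hold: Σ_{n=1}^∞ (2n choose n) x^{2n} / (4ⁿ · 2n) = log(2/(1 + √(1−x²))), and Σ_{n=1}^∞ (2n choose n) x^{2n} / (4ⁿ (2n+1)) = arcsin(x)/x − 1. -/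
open Real Set Filter Topology

noncomputable def cb (n : ℕ) : ℝ := (Nat.centralBinom n : ℝ) / 4 ^ n

lemma cb_pos (n : ℕ) : 0 < cb n :=
  div_pos (by exact_mod_cast n.centralBinom_pos) (by positivity)

lemma cb_zero : cb 0 = 1 := by simp [cb, Nat.centralBinom]

lemma cb_rec (n : ℕ) : (2 * (n : ℝ) + 2) * cb (n + 1) = (2 * n + 1) * cb n := by
  have h := Nat.succ_mul_centralBinom_succ n
  have h' : ((n : ℝ) + 1) * (Nat.centralBinom (n + 1) : ℝ)
      = 2 * (2 * n + 1) * (Nat.centralBinom n : ℝ) := by exact_mod_cast h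
  have e1 : (2 * (n : ℝ) + 2) * cb (n + 1)
      = 2 * (((n:ℝ) + 1) * (Nat.centralBinom (n+1) : ℝ)) / 4 ^ (n+1) := by
    rw [cb]; ring
  rw [e1, h', cb, pow_succ]; ring

lemma cb_le_one (n : ℕ) : cb n ≤ 1 := by
  induction n with
  | zero => simp [cb_zero]
  | succ n ih =>
    have hr := cb_rec n
    nlinarith [cb_pos (n + 1), cb_pos n, Nat.cast_nonneg (α := ℝ) n]

lemma cb_sq (n : ℕ) : cb n ^ 2 * (2 * n + 1) ≤ 1 := by
  induction n with
  | zero => simp [cb_zero]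
  | succ n ih =>
    have hr := cb_rec n
    have hn : (0:ℝ) ≤ (n : ℝ) := Nat.cast_nonneg n
    have h1 : cb (n + 1) = (2 * n + 1) / (2 * n + 2) * cb n := by
      field_simp
      linarith [hr]
    have h2 : ((n:ℝ) + 1 : ℝ) = (n : ℝ) + 1 := by norm_num
    rw [h1]
    have key : ((2*(n:ℝ)+1)/(2*n+2))^2 * (2*(n+1:ℕ) + 1) ≤ (2*n+1) := by
      push_cast
      rw [div_pow, div_mul_eq_mul_div, div_le_iff₀ (by positivity)]
      nlinarith
    calc ((2*(n:ℝ)+1)/(2*n+2) * cb n)^2 * (2*(n+1:ℕ)+1)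
        = cb n ^2 * (((2*(n:ℝ)+1)/(2*n+2))^2 * (2*(n+1:ℕ)+1)) := by ring
      _ ≤ cb n ^2 * (2*n+1) := by nlinarith [sq_nonneg (cb n), cb_pos n]
      _ ≤ 1 := ih

lemma cb_mul_sqrt (n : ℕ) : cb n * Real.sqrt n ≤ 1 := by
  have h0 : (0:ℝ) ≤ (n:ℝ) := Nat.cast_nonneg n
  have h1 : (cb n * Real.sqrt n)^2 ≤ 1 := by
    have : (cb n * Real.sqrt n)^2 = cb n ^2 * (n : ℝ) := by
      rw [mul_pow, Real.sq_sqrt h0]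
    rw [this]
    nlinarith [cb_sq n, sq_nonneg (cb n)]
  nlinarith [mul_nonneg (cb_pos n).le (Real.sqrt_nonneg (n:ℝ)), h1]
noncomputable def Sfun (t : ℝ) : ℝ := ∑' n, cb n * t ^ n

lemma summable_cb_pow {t : ℝ} (ht : |t| < 1) : Summable fun n => cb n * t ^ n := by
  apply Summable.of_norm_bounded (summable_geometric_of_lt_one (abs_nonneg t) ht)
  intro n
  rw [norm_mul, norm_pow, Real.norm_eq_abs, Real.norm_eq_abs, abs_of_pos (cb_pos n)]
  calc cb n * |t| ^ n ≤ 1 * |t| ^ n := by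
        gcongr; exact cb_le_one n
    _ = |t| ^ n := one_mul _

lemma summable_aux_deriv {r : ℝ} (hr0 : 0 ≤ r) (hr : r < 1) :
    Summable fun n : ℕ => (n : ℝ) * r ^ (n - 1) := by
  rw [← summable_nat_add_iff 1]
  simp only [Nat.add_sub_cancel, Nat.cast_add, Nat.cast_one]
  have h1 : Summable fun n : ℕ => (n : ℝ) * r ^ n := by
    simpa using summable_pow_mul_geometric_of_norm_lt_one 1
      (by rwa [Real.norm_eq_abs, abs_of_nonneg hr0])
  have h2 : Summable fun n : ℕ => r ^ n := summable_geometric_of_lt_one hr0 hr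
  simpa [add_mul] using h1.add h2

lemma bound_deriv_term {r t : ℝ} (h : |t| ≤ r) (n : ℕ) :
    ‖cb n * ((n : ℝ) * t ^ (n - 1))‖ ≤ (n : ℝ) * r ^ (n - 1) := by
  have hr0 : 0 ≤ r := le_trans (abs_nonneg t) h
  rw [norm_mul, norm_mul, Real.norm_eq_abs, Real.norm_eq_abs, Real.norm_eq_abs,
    abs_of_pos (cb_pos n), Nat.abs_cast, abs_pow]
  calc cb n * ((n:ℝ) * |t| ^ (n-1)) ≤ 1 * ((n:ℝ) * r ^ (n-1)) :=
        mul_le_mul (cb_le_one n)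
          (mul_le_mul_of_nonneg_left (pow_le_pow_left₀ (abs_nonneg t) h _) (Nat.cast_nonneg n)) (by positivity) one_pos.le
    _ = (n:ℝ) * r ^ (n-1) := one_mul _

lemma hasDerivAt_Sfun {t : ℝ} (ht : |t| < 1) :
    HasDerivAt Sfun (∑' n, cb n * ((n : ℝ) * t ^ (n - 1))) t := by
  set r : ℝ := (1 + |t|) / 2 with hrdef
  have hr0 : 0 ≤ r := by positivity
  have hr1 : r < 1 := by rw [hrdef]; linarith
  have htr : |t| < r := by rw [hrdef]; linarith [abs_nonneg t]
  have hopen : IsOpen (Ioo (-r) r) := isOpen_Ioo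
  have hmem : t ∈ Ioo (-r) r := abs_lt.1 htr
  have h0 : (0:ℝ) ∈ Ioo (-r) r := by
    constructor <;> simp_all <;> linarith [abs_nonneg t]
  exact hasDerivAt_tsum_of_isPreconnected (summable_aux_deriv hr0 hr1) hopen
    (convex_Ioo _ _).isPreconnected
    (fun n y _ => (hasDerivAt_pow n y).const_mul (cb n))
    (fun n y hy => bound_deriv_term (by rw [abs_le]; exact ⟨hy.1.le, hy.2.le⟩) n)
    h0 (summable_cb_pow (by norm_num : |(0:ℝ)| < 1)) hmem
lemma summable_deriv_term {t : ℝ} (ht : |t| < 1) :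
    Summable fun n : ℕ => cb n * ((n : ℝ) * t ^ (n - 1)) := by
  have hr1 : (1 + |t|) / 2 < 1 := by linarith
  have hr0 : (0:ℝ) ≤ (1 + |t|) / 2 := by positivity
  exact Summable.of_norm_bounded (summable_aux_deriv hr0 hr1)
    (fun n => bound_deriv_term (by linarith [abs_nonneg t]) n)

lemma ode {t : ℝ} (ht : |t| < 1) :
    2 * (1 - t) * (∑' n : ℕ, cb n * ((n : ℝ) * t ^ (n - 1))) = Sfun t := by
  have hd := summable_deriv_term ht
  have e2 : ∀ n : ℕ, t * (cb n * ((n : ℝ) * t ^ (n - 1))) = (n : ℝ) * cb n * t ^ n := by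
    intro n
    cases n with
    | zero => simp
    | succ m => push_cast [Nat.add_sub_cancel, pow_succ]; ring
  have hmono : Summable fun n : ℕ => (n : ℝ) * cb n * t ^ n := (hd.mul_left t).congr e2
  have h2D : 2 * (∑' n : ℕ, cb n * ((n : ℝ) * t ^ (n - 1)))
      = ∑' n : ℕ, (2 * (n : ℝ) + 1) * cb n * t ^ n := by
    rw [hd.tsum_eq_zero_add]
    simp only [Nat.cast_zero, zero_mul, mul_zero, zero_add]
    rw [← tsum_mul_left]
    apply tsum_congr
    intro n
    have hr := cb_rec n
    push_cast [Nat.add_sub_cancel]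
    linear_combination t ^ n * hr
  have h2tD : t * (∑' n : ℕ, cb n * ((n : ℝ) * t ^ (n - 1)))
      = ∑' n : ℕ, (n : ℝ) * cb n * t ^ n := by
    rw [← tsum_mul_left]; exact tsum_congr e2
  have hsplit : ∑' n : ℕ, (2 * (n : ℝ) + 1) * cb n * t ^ n
      = 2 * (∑' n : ℕ, (n : ℝ) * cb n * t ^ n) + Sfun t := by
    rw [Sfun, ← tsum_mul_left, ← Summable.tsum_add (hmono.mul_left 2) (summable_cb_pow ht)]
    apply tsum_congr; intro n; ring
  calc 2 * (1 - t) * (∑' n : ℕ, cb n * ((n : ℝ) * t ^ (n - 1)))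
      = 2 * (∑' n : ℕ, cb n * ((n : ℝ) * t ^ (n - 1)))
        - 2 * (t * (∑' n : ℕ, cb n * ((n : ℝ) * t ^ (n - 1)))) := by ring
    _ = Sfun t := by rw [h2D, h2tD, hsplit]; ring

lemma Sfun_zero : Sfun 0 = 1 := by
  rw [Sfun, Summable.tsum_eq_zero_add (summable_cb_pow (by norm_num))]
  simp [cb_zero]

lemma Sfun_sq {t : ℝ} (ht0 : 0 ≤ t) (ht : t < 1) : Sfun t ^ 2 * (1 - t) = 1 := by
  have key : ∀ y ∈ Ioo (-1:ℝ) 1, HasDerivAt (fun z => Sfun z ^ 2 * (1 - z)) 0 y := by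
    intro y hy
    have hy1 : |y| < 1 := abs_lt.2 ⟨by linarith [hy.1], hy.2⟩
    have hS := hasDerivAt_Sfun hy1
    have h1 : HasDerivAt (fun z => Sfun z ^ 2 * (1 - z))
        ((2 * Sfun y ^ 1 * (∑' n : ℕ, cb n * ((n : ℝ) * y ^ (n - 1)))) * (1 - y)
          + Sfun y ^ 2 * (0 - 1)) y :=
      (hS.pow 2).mul ((hasDerivAt_const y (1:ℝ)).sub (hasDerivAt_id y))
    convert h1 using 1
    have hode := ode hy1
    rw [pow_one]
    linear_combination (-(Sfun y)) * hode
  have hcont : ContinuousOn (fun z => Sfun z ^ 2 * (1 - z)) (Icc 0 t) := by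
    intro y hy
    exact ((key y ⟨by linarith [hy.1], lt_of_le_of_lt hy.2 ht⟩).continuousAt).continuousWithinAt
  have hderiv : ∀ y ∈ Ico (0:ℝ) t,
      HasDerivWithinAt (fun z => Sfun z ^ 2 * (1 - z)) 0 (Ici y) y :=
    fun y hy => ((key y ⟨by linarith [hy.1], lt_trans hy.2 ht⟩).hasDerivWithinAt)
  have hc := constant_of_has_deriv_right_zero hcont hderiv t (right_mem_Icc.mpr ht0)
  rw [hc, Sfun_zero]; norm_num

lemma hasSum_Sfun {t : ℝ} (ht0 : 0 ≤ t) (ht : t < 1) :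
    HasSum (fun n : ℕ => cb n * t ^ n) (1 / Real.sqrt (1 - t)) := by
  have hsum := summable_cb_pow (t := t) (by rwa [abs_of_nonneg ht0])
  have hge : 1 ≤ Sfun t := by
    have h := hsum.le_tsum 0 (fun n _ => mul_nonneg (cb_pos n).le (pow_nonneg ht0 n))
    simpa [cb_zero, Sfun] using h
  have hsq := Sfun_sq ht0 ht
  have hpos : 0 < 1 - t := by linarith
  have hval : Sfun t = 1 / Real.sqrt (1 - t) := by
    have h1 : Sfun t ^ 2 = (1 - t)⁻¹ := by
      field_simp
      nlinarith [hsq]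
    have h2 : Real.sqrt (Sfun t ^ 2) = Sfun t := Real.sqrt_sq (by linarith)
    rw [← h2, h1, Real.sqrt_inv, one_div]
  rw [← hval]
  exact hsum.hasSum

lemma hasSum_inv_sqrt {x : ℝ} (hx : |x| < 1) :
    HasSum (fun n : ℕ => cb n * x ^ (2 * n)) (1 / Real.sqrt (1 - x ^ 2)) := by
  have h1 : x ^ 2 < 1 := by nlinarith [sq_abs x, abs_nonneg x]
  have h := hasSum_Sfun (sq_nonneg x) h1
  simpa [pow_mul] using h
noncomputable def F1 (x : ℝ) : ℝ := ∑' n : ℕ, cb (n+1) * x ^ (2*(n+1)) / (2*(n:ℝ)+2)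
noncomputable def F2 (x : ℝ) : ℝ := ∑' n : ℕ, cb (n+1) * x ^ (2*(n+1)) / (2*(n:ℝ)+3)
noncomputable def Phi (x : ℝ) : ℝ := ∑' n : ℕ, cb n * x ^ (2*n+1) / (2*(n:ℝ)+1)

lemma summable_u : Summable fun n : ℕ => cb (n+1) / (2*(n:ℝ)+2) := by
  have hv : Summable fun n : ℕ => ((((n:ℝ)+1)) ^ ((3:ℝ)/2))⁻¹ := by
    have h1 : Summable fun n : ℕ => 1 / (n:ℝ) ^ ((3:ℝ)/2) :=
      (Real.summable_one_div_nat_rpow).mpr (by norm_num)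
    have h2 := (summable_nat_add_iff 1).mpr h1
    simpa [one_div] using h2
  apply Summable.of_nonneg_of_le (fun n => div_nonneg (cb_pos _).le (by positivity)) _ hv
  intro n
  have e : ((n:ℝ)+1) ^ ((3:ℝ)/2) = ((n:ℝ)+1) * Real.sqrt ((n:ℝ)+1) := by
    rw [show (3:ℝ)/2 = 1 + 1/2 by norm_num, Real.rpow_add (by positivity),
      Real.rpow_one, Real.sqrt_eq_rpow]
  rw [e]
  have key : cb (n+1) * Real.sqrt ((n:ℝ)+1) ≤ 1 := by
    have h := cb_mul_sqrt (n+1)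
    push_cast at h
    exact h
  have hs : (0:ℝ) ≤ Real.sqrt ((n:ℝ)+1) := Real.sqrt_nonneg _
  have hs1 : (1:ℝ) ≤ Real.sqrt ((n:ℝ)+1) := by
    calc (1:ℝ) = Real.sqrt 1 := Real.sqrt_one.symm
      _ ≤ Real.sqrt ((n:ℝ)+1) :=
        Real.sqrt_le_sqrt (by linarith [Nat.cast_nonneg (α := ℝ) n])
  rw [← one_div, div_le_div_iff₀ (by positivity) (by positivity)]
  have hn : (0:ℝ) ≤ (n:ℝ) := Nat.cast_nonneg n
  nlinarith [key, cb_pos (n+1)]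

lemma term_le_one {x : ℝ} (hx : |x| ≤ 1) (n k : ℕ) : cb k * |x| ^ n ≤ cb k := by
  nlinarith [pow_le_one₀ (abs_nonneg x) hx (n := n), cb_pos k,
    pow_nonneg (abs_nonneg x) n]

lemma bound1 {x : ℝ} (hx : |x| ≤ 1) (n : ℕ) :
    ‖cb (n+1) * x ^ (2*(n+1)) / (2*(n:ℝ)+2)‖ ≤ cb (n+1) / (2*(n:ℝ)+2) := by
  rw [norm_div, norm_mul, Real.norm_eq_abs, Real.norm_eq_abs, Real.norm_eq_abs,
    abs_of_pos (cb_pos (n+1)), abs_of_pos (by positivity : (0:ℝ) < 2*(n:ℝ)+2), abs_pow]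
  exact div_le_div₀ (cb_pos (n+1)).le (term_le_one hx _ _) (by positivity) le_rfl

lemma bound2 {x : ℝ} (hx : |x| ≤ 1) (n : ℕ) :
    ‖cb (n+1) * x ^ (2*(n+1)) / (2*(n:ℝ)+3)‖ ≤ cb (n+1) / (2*(n:ℝ)+2) := by
  rw [norm_div, norm_mul, Real.norm_eq_abs, Real.norm_eq_abs, Real.norm_eq_abs,
    abs_of_pos (cb_pos (n+1)), abs_of_pos (by positivity : (0:ℝ) < 2*(n:ℝ)+3), abs_pow]
  exact div_le_div₀ (cb_pos (n+1)).le (term_le_one hx _ _) (by positivity) (by linarith)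

lemma summable_f1 {x : ℝ} (hx : |x| ≤ 1) :
    Summable fun n : ℕ => cb (n+1) * x ^ (2*(n+1)) / (2*(n:ℝ)+2) :=
  Summable.of_norm_bounded summable_u (bound1 hx)

lemma summable_f2 {x : ℝ} (hx : |x| ≤ 1) :
    Summable fun n : ℕ => cb (n+1) * x ^ (2*(n+1)) / (2*(n:ℝ)+3) :=
  Summable.of_norm_bounded summable_u (bound2 hx)

lemma summable_phi {x : ℝ} (hx : |x| ≤ 1) :
    Summable fun n : ℕ => cb n * x ^ (2*n+1) / (2*(n:ℝ)+1) := by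
  rw [← summable_nat_add_iff 1]
  apply Summable.of_norm_bounded summable_u
  intro n
  push_cast
  rw [norm_div, norm_mul, Real.norm_eq_abs, Real.norm_eq_abs, Real.norm_eq_abs,
    abs_of_pos (cb_pos (n+1)),
    abs_of_pos (by positivity : (0:ℝ) < 2*((n:ℝ)+1)+1), abs_pow]
  exact div_le_div₀ (cb_pos (n+1)).le (term_le_one hx _ _) (by positivity) (by linarith)

lemma contOn_F1 : ContinuousOn F1 (Icc (-1:ℝ) 1) := by
  apply (tendstoUniformlyOn_tsum summable_u
    (fun n x hx => bound1 (abs_le.2 ⟨hx.1, hx.2⟩) n)).continuousOn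
  exact (Filter.Eventually.of_forall fun t =>
    continuousOn_finset_sum t fun n _ => by fun_prop).frequently

lemma contOn_F2 : ContinuousOn F2 (Icc (-1:ℝ) 1) := by
  apply (tendstoUniformlyOn_tsum summable_u
    (fun n x hx => bound2 (abs_le.2 ⟨hx.1, hx.2⟩) n)).continuousOn
  exact (Filter.Eventually.of_forall fun t =>
    continuousOn_finset_sum t fun n _ => by fun_prop).frequently
lemma summable_geom_sq {r : ℝ} (hr0 : 0 ≤ r) (hr : r < 1) (c : ℝ) :
    Summable fun n : ℕ => c * r ^ (2*n+1) := by
  have h : Summable fun n : ℕ => (c * r) * (r^2) ^ n :=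
    (summable_geometric_of_lt_one (by positivity)
      (by nlinarith)).mul_left (c * r)
  apply h.congr
  intro n
  rw [← pow_mul, pow_add, pow_one]
  ring

lemma const_on_Ioo {g : ℝ → ℝ} (key : ∀ y ∈ Ioo (-1:ℝ) 1, HasDerivAt g 0 y)
    {x : ℝ} (hx : |x| < 1) : g x = g 0 := by
  have hx' := abs_lt.1 hx
  rcases le_or_gt 0 x with h | h
  · have hcont : ContinuousOn g (Icc 0 x) := fun y hy =>
      ((key y ⟨by linarith [hy.1], lt_of_le_of_lt hy.2 hx'.2⟩).continuousAt).continuousWithinAt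
    exact constant_of_has_deriv_right_zero hcont
      (fun y hy => (key y ⟨by linarith [hy.1], lt_trans hy.2 hx'.2⟩).hasDerivWithinAt)
      x (right_mem_Icc.mpr h)
  · have hcont : ContinuousOn g (Icc x 0) := fun y hy =>
      ((key y ⟨lt_of_lt_of_le hx'.1 hy.1, by linarith [hy.2]⟩).continuousAt).continuousWithinAt
    exact (constant_of_has_deriv_right_zero hcont
      (fun y hy => (key y ⟨lt_of_lt_of_le hx'.1 hy.1, by linarith [hy.2]⟩).hasDerivWithinAt)
      0 (right_mem_Icc.mpr h.le)).symm

lemma F1_hasDeriv {x : ℝ} (hx : |x| < 1) :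
    HasDerivAt F1 (∑' n : ℕ, cb (n+1) * x ^ (2*n+1)) x := by
  set r : ℝ := (1 + |x|) / 2 with hrdef
  have hr0 : (0:ℝ) ≤ r := by positivity
  have hr1 : r < 1 := by rw [hrdef]; linarith
  have htr : |x| < r := by rw [hrdef]; linarith [abs_nonneg x]
  have hterm : ∀ (n : ℕ) (y : ℝ),
      HasDerivAt (fun z => cb (n+1) * z ^ (2*(n+1)) / (2*(n:ℝ)+2))
        (cb (n+1) * y ^ (2*n+1)) y := by
    intro n y
    have h := ((hasDerivAt_pow (2*(n+1)) y).const_mul (cb (n+1))).div_const (2*(n:ℝ)+2)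
    refine h.congr_deriv (Eq.symm ?_)
    have he : 2*(n+1) - 1 = 2*n+1 := by omega
    rw [he]
    push_cast
    field_simp
  have hbd : ∀ (n : ℕ) (y : ℝ), y ∈ Ioo (-r) r →
      ‖cb (n+1) * y ^ (2*n+1)‖ ≤ 1 * r ^ (2*n+1) := by
    intro n y hy
    have hyr : |y| ≤ r := by rw [abs_le]; exact ⟨hy.1.le, hy.2.le⟩
    rw [norm_mul, Real.norm_eq_abs, Real.norm_eq_abs, abs_of_pos (cb_pos (n+1)), abs_pow,
      one_mul]
    calc cb (n+1) * |y| ^ (2*n+1) ≤ 1 * |y| ^ (2*n+1) :=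
          mul_le_mul_of_nonneg_right (cb_le_one (n+1)) (by positivity)
      _ = |y| ^ (2*n+1) := one_mul _
      _ ≤ r ^ (2*n+1) := pow_le_pow_left₀ (abs_nonneg y) hyr _
  exact hasDerivAt_tsum_of_isPreconnected (summable_geom_sq hr0 hr1 1) isOpen_Ioo
    (convex_Ioo _ _).isPreconnected
    (fun n y _ => hterm n y) hbd
    (by
      have hrpos : 0 < r := by rw [hrdef]; positivity
      exact ⟨neg_lt_zero.mpr hrpos, hrpos⟩)
    (by simpa using summable_f1 (by norm_num : |(0:ℝ)| ≤ 1))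
    (abs_lt.1 htr)

lemma Phi_hasDeriv {x : ℝ} (hx : |x| < 1) :
    HasDerivAt Phi (∑' n : ℕ, cb n * x ^ (2*n)) x := by
  set r : ℝ := (1 + |x|) / 2 with hrdef
  have hr0 : (0:ℝ) ≤ r := by positivity
  have hr1 : r < 1 := by rw [hrdef]; linarith
  have htr : |x| < r := by rw [hrdef]; linarith [abs_nonneg x]
  have hterm : ∀ (n : ℕ) (y : ℝ),
      HasDerivAt (fun z => cb n * z ^ (2*n+1) / (2*(n:ℝ)+1))
        (cb n * y ^ (2*n)) y := by
    intro n y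
    have h := ((hasDerivAt_pow (2*n+1) y).const_mul (cb n)).div_const (2*(n:ℝ)+1)
    refine h.congr_deriv (Eq.symm ?_)
    have he : 2*n+1 - 1 = 2*n := by omega
    rw [he]
    push_cast
    field_simp
  have hbd : ∀ (n : ℕ) (y : ℝ), y ∈ Ioo (-r) r →
      ‖cb n * y ^ (2*n)‖ ≤ (r^2) ^ n := by
    intro n y hy
    have hyr : |y| ≤ r := by rw [abs_le]; exact ⟨hy.1.le, hy.2.le⟩
    rw [norm_mul, Real.norm_eq_abs, Real.norm_eq_abs, abs_of_pos (cb_pos n), abs_pow,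
      ← pow_mul]
    calc cb n * |y| ^ (2*n) ≤ 1 * |y| ^ (2*n) :=
          mul_le_mul_of_nonneg_right (cb_le_one n) (by positivity)
      _ = |y| ^ (2*n) := one_mul _
      _ ≤ r ^ (2*n) := pow_le_pow_left₀ (abs_nonneg y) hyr _
  exact hasDerivAt_tsum_of_isPreconnected
    (summable_geometric_of_lt_one (by positivity) (by nlinarith) : Summable fun n:ℕ => (r^2)^n)
    isOpen_Ioo (convex_Ioo _ _).isPreconnected
    (fun n y _ => hterm n y) hbd
    (by
      have hrpos : 0 < r := by rw [hrdef]; positivity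
      exact ⟨neg_lt_zero.mpr hrpos, hrpos⟩)
    (by simpa using summable_phi (by norm_num : |(0:ℝ)| ≤ 1))
    (abs_lt.1 htr)

lemma sqrt_pos_of_abs_lt {x : ℝ} (hx : |x| < 1) : 0 < Real.sqrt (1 - x^2) := by
  apply Real.sqrt_pos.2
  nlinarith [sq_abs x, abs_nonneg x]

lemma Phi_eq_arcsin {x : ℝ} (hx : |x| < 1) : Phi x = Real.arcsin x := by
  have key : ∀ y ∈ Ioo (-1:ℝ) 1, HasDerivAt (fun z => Phi z - Real.arcsin z) 0 y := by
    intro y hy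
    have hy1 : |y| < 1 := abs_lt.2 ⟨by linarith [hy.1], hy.2⟩
    have hP := Phi_hasDeriv hy1
    have hy_ne1 : y ≠ 1 := by intro hh; rw [hh] at hy1; simp at hy1
    have hy_ne1' : y ≠ -1 := by intro hh; rw [hh] at hy1; simp at hy1
    have hA := Real.hasDerivAt_arcsin hy_ne1' hy_ne1
    have h := hP.sub hA
    refine h.congr_deriv (Eq.symm ?_)
    rw [(hasSum_inv_sqrt hy1).tsum_eq]
    ring
  have h := const_on_Ioo key hx
  have h0 : Phi 0 = 0 := by
    rw [Phi]
    convert tsum_zero with n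
    simp
  rw [h0, Real.arcsin_zero] at h
  linarith [h]

lemma part2_interior {x : ℝ} (hx : |x| < 1) (hx0 : x ≠ 0) :
    F2 x = Real.arcsin x / x - 1 := by
  have hsum : Summable fun n : ℕ => cb n * x ^ (2*n+1) / (2*(n:ℝ)+1) :=
    summable_phi hx.le
  have hsplit : Phi x = x + x * F2 x := by
    rw [Phi, hsum.tsum_eq_zero_add, F2, ← tsum_mul_left]
    congr 1
    · simp [cb_zero]
    · apply tsum_congr
      intro n
      rw [pow_succ]
      push_cast
      ring
  have hPhi := Phi_eq_arcsin hx
  rw [hPhi] at hsplit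
  field_simp
  linarith [hsplit]

lemma tsum_deriv1 {x : ℝ} (hx : |x| < 1) (hx0 : x ≠ 0) :
    ∑' n : ℕ, cb (n+1) * x ^ (2*n+1) = (1/Real.sqrt (1-x^2) - 1) / x := by
  have h := hasSum_inv_sqrt hx
  have h1 : HasSum (fun n : ℕ => cb (n+1) * x ^ (2*(n+1)))
      (1/Real.sqrt (1-x^2) - 1) := by
    have h2 := (hasSum_nat_add_iff' (f := fun n : ℕ => cb n * x ^ (2*n)) 1).mpr h
    simpa [cb_zero] using h2
  have h4 := h1.div_const x
  have e : (fun n : ℕ => cb (n+1) * x ^ (2*(n+1)) / x)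
      = fun n : ℕ => cb (n+1) * x ^ (2*n+1) := by
    funext n
    rw [show 2*(n+1) = (2*n+1)+1 by omega, pow_succ]
    field_simp
  rw [e] at h4
  exact h4.tsum_eq

lemma log_arg_pos (y : ℝ) : (0:ℝ) < 1 + Real.sqrt (1 - y^2) := by
  linarith [Real.sqrt_nonneg (1 - y^2)]

lemma G1_hasDeriv {x : ℝ} (hx : |x| < 1) :
    HasDerivAt (fun y => Real.log (2 / (1 + Real.sqrt (1 - y^2))))
      (x / (Real.sqrt (1-x^2) * (1 + Real.sqrt (1-x^2)))) x := by
  have hpos : 0 < 1 - x^2 := by nlinarith [sq_abs x, abs_nonneg x]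
  have hs := sqrt_pos_of_abs_lt hx
  have hinner : HasDerivAt (fun y : ℝ => 1 - y^2) (-(2*x)) x := by
    have := (hasDerivAt_const x (1:ℝ)).sub (hasDerivAt_pow 2 x)
    exact this.congr_deriv (by norm_num)
  have hsq : HasDerivAt (fun y : ℝ => Real.sqrt (1 - y^2))
      (-(2*x) / (2*Real.sqrt (1-x^2))) x := hinner.sqrt hpos.ne'
  have hden : HasDerivAt (fun y : ℝ => 1 + Real.sqrt (1 - y^2))
      (-(2*x)/(2*Real.sqrt (1-x^2))) x := by
    exact ((hasDerivAt_const x (1:ℝ)).add hsq).congr_deriv (zero_add _)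
  have e : (fun y : ℝ => Real.log (2 / (1 + Real.sqrt (1 - y^2))))
      = fun y => Real.log 2 - Real.log (1 + Real.sqrt (1 - y^2)) := by
    funext y
    rw [Real.log_div (by norm_num) (ne_of_gt (log_arg_pos y))]
  rw [e]
  have hlog : HasDerivAt (fun y : ℝ => Real.log (1 + Real.sqrt (1 - y^2)))
      ((-(2*x)/(2*Real.sqrt (1-x^2))) / (1 + Real.sqrt (1-x^2))) x :=
    hden.log (ne_of_gt (log_arg_pos x))
  have h := (hasDerivAt_const x (Real.log 2)).sub hlog
  refine h.congr_deriv (Eq.symm ?_)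
  have h1s := log_arg_pos x
  field_simp
  ring

lemma part1_interior {x : ℝ} (hx : |x| < 1) :
    F1 x = Real.log (2 / (1 + Real.sqrt (1 - x^2))) := by
  have key : ∀ y ∈ Ioo (-1:ℝ) 1,
      HasDerivAt (fun z => F1 z - Real.log (2 / (1 + Real.sqrt (1 - z^2)))) 0 y := by
    intro y hy
    have hy1 : |y| < 1 := abs_lt.2 ⟨by linarith [hy.1], hy.2⟩
    have h := (F1_hasDeriv hy1).sub (G1_hasDeriv hy1)
    refine h.congr_deriv (Eq.symm ?_)
    by_cases hy0 : y = 0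
    · subst hy0
      have hz : ∑' n : ℕ, cb (n+1) * (0:ℝ) ^ (2*n+1) = 0 := by
        convert tsum_zero with n; simp
      rw [hz]
      simp
    · rw [tsum_deriv1 hy1 hy0]
      have hs := sqrt_pos_of_abs_lt hy1
      have hsq : Real.sqrt (1-y^2) ^ 2 = 1 - y^2 :=
        Real.sq_sqrt (by nlinarith [sq_abs y, abs_nonneg y])
      have h1s : (0:ℝ) < 1 + Real.sqrt (1-y^2) := by linarith
      field_simp
      nlinarith [hsq, hs]
  have h := const_on_Ioo key hx
  have hF0 : F1 0 = 0 := by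
    rw [F1]; convert tsum_zero with n; simp
  rw [hF0] at h
  norm_num [Real.sqrt_one] at h
  linarith [h]

lemma endpoint {f g : ℝ → ℝ} (hf : ContinuousOn f (Icc (-1:ℝ) 1))
    {x : ℝ} (hx : |x| = 1) (hg : ContinuousAt g x)
    (heq : ∀ y, |y| < 1 → y ≠ 0 → f y = g y) : f x = g x := by
  have hxI : x ∈ Icc (-1:ℝ) 1 := abs_le.1 hx.le
  set u : ℕ → ℝ := fun k => (1 - 1/((k:ℝ)+2)) * x with hu
  have hfrac : ∀ k : ℕ, 0 < 1/((k:ℝ)+2) ∧ 1/((k:ℝ)+2) ≤ 1/2 := by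
    intro k
    constructor
    · positivity
    · rw [div_le_div_iff₀ (by positivity) (by norm_num)]
      have : (0:ℝ) ≤ (k:ℝ) := Nat.cast_nonneg k
      linarith
  have hu_abs : ∀ k, |u k| = 1 - 1/((k:ℝ)+2) := by
    intro k
    rw [hu]
    simp only []
    rw [abs_mul, hx, mul_one, abs_of_nonneg (by linarith [(hfrac k).1, (hfrac k).2])]
  have hlt : ∀ k, |u k| < 1 := fun k => by
    rw [hu_abs]; linarith [(hfrac k).1]
  have hne : ∀ k, u k ≠ 0 := by
    intro k
    have : 0 < |u k| := by rw [hu_abs]; linarith [(hfrac k).2]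
    exact abs_pos.mp this
  have hlim : Tendsto u atTop (𝓝 x) := by
    have h2 : Tendsto (fun k : ℕ => ((k:ℝ)+2)) atTop atTop :=
      tendsto_atTop_add_const_right _ 2 tendsto_natCast_atTop_atTop
    have h3 := h2.inv_tendsto_atTop
    have h1 : Tendsto (fun k : ℕ => 1 - 1/((k:ℝ)+2)) atTop (𝓝 1) := by
      have := (tendsto_const_nhds (x := (1:ℝ)) (f := atTop)).sub h3
      simpa [one_div, Function.comp] using this
    have h4 := h1.mul_const x
    rw [one_mul] at h4
    simpa [hu, one_div] using h4
  have hfin : Tendsto (fun k => f (u k)) atTop (𝓝 (f x)) := by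
    apply (hf x hxI).tendsto.comp
    apply tendsto_nhdsWithin_of_tendsto_nhds_of_eventually_within _ hlim
    exact Eventually.of_forall fun k => abs_le.1 (hlt k).le
  have hgin : Tendsto (fun k => f (u k)) atTop (𝓝 (g x)) := by
    have e : (fun k => f (u k)) = fun k => g (u k) :=
      funext fun k => heq _ (hlt k) (hne k)
    rw [e]
    exact hg.tendsto.comp hlim
  exact tendsto_nhds_unique hfin hgin
/-- For `0 < |x| ≤ 1`:
`Σ_{n≥1} (2n choose n) x^{2n}/(4ⁿ·2n) = log(2/(1+√(1−x²)))` and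
`Σ_{n≥1} (2n choose n) x^{2n}/(4ⁿ(2n+1)) = arcsin(x)/x − 1`. -/
theorem centralBinom_gf (x : ℝ) (hx : 0 < |x|) (hx1 : |x| ≤ 1) :
    (∑' n : ℕ, (Nat.centralBinom (n + 1) : ℝ) * x ^ (2 * (n + 1))
        / (4 ^ (n + 1) * (2 * (n + 1) : ℝ)) =
      Real.log (2 / (1 + Real.sqrt (1 - x ^ 2)))) ∧
    (∑' n : ℕ, (Nat.centralBinom (n + 1) : ℝ) * x ^ (2 * (n + 1))
        / (4 ^ (n + 1) * (2 * (n + 1) + 1 : ℝ)) =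
      Real.arcsin x / x - 1) := by
  have hx0 : x ≠ 0 := by simpa [abs_pos] using hx
  constructor
  · have e : ∀ n : ℕ, (Nat.centralBinom (n + 1) : ℝ) * x ^ (2 * (n + 1))
        / (4 ^ (n + 1) * (2 * (n + 1) : ℝ))
        = cb (n+1) * x ^ (2*(n+1)) / (2*(n:ℝ)+2) := by
      intro n
      rw [cb, div_mul_eq_mul_div, div_div]
      push_cast
      ring
    rw [tsum_congr e]
    show F1 x = _
    rcases lt_or_eq_of_le hx1 with h | h
    · exact part1_interior h
    · have hgc : ContinuousAt (fun y : ℝ => Real.log (2 / (1 + Real.sqrt (1 - y^2)))) x := by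
        have hden : Continuous (fun y : ℝ => 1 + Real.sqrt (1 - y^2)) := by
          fun_prop
        exact ContinuousAt.log
          (continuousAt_const.div hden.continuousAt (ne_of_gt (log_arg_pos x)))
          (ne_of_gt (div_pos two_pos (log_arg_pos x)))
      exact endpoint contOn_F1 h hgc (fun y hy _ => part1_interior hy)
  · have e : ∀ n : ℕ, (Nat.centralBinom (n + 1) : ℝ) * x ^ (2 * (n + 1))
        / (4 ^ (n + 1) * (2 * (n + 1) + 1 : ℝ))
        = cb (n+1) * x ^ (2*(n+1)) / (2*(n:ℝ)+3) := by
      intro n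
      rw [cb, div_mul_eq_mul_div, div_div]
      push_cast
      ring
    rw [tsum_congr e]
    show F2 x = _
    rcases lt_or_eq_of_le hx1 with h | h
    · exact part2_interior h hx0
    · have hgc : ContinuousAt (fun y : ℝ => Real.arcsin y / y - 1) x :=
        ((Real.continuous_arcsin.continuousAt).div continuousAt_id hx0).sub
          continuousAt_const
      exact endpoint contOn_F2 h hgc (fun y hy hy0 => part2_interior hy hy0)
end
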